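/- arXiv:0806.4864 — 4 statements merged into one kernel-verified Lean document; each statement's English description precedes it below -/
import Mathlib

section
/- Let C be a bivariate copula (so C(u₁,1) = u₁ and C(1,u₂) = u₂), let C_n be the empirical copula of the sample, and let j : I → ℝ be continuous and of bounded variation on I. Then | ∫_I j(u₁,u₂) d(C_n − C)(u₁,u₂) | ≤ 5 · sup_{u ∈ I} | C_n(u) − C(u) | · ∫_I d|j|. -/
open MeasureTheory ProbabilityTheory Filter Set Asymptotics
open scoped Topology ENNReal NNReal

noncomputable section

namespace Copula

/-- The unit square `I = [0,1]²`. -/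
def Isq : Set (ℝ × ℝ) := Icc (0:ℝ) 1 ×ˢ Icc (0:ℝ) 1

/-- The open unit square `(0,1)²`. -/
def IsqO : Set (ℝ × ℝ) := Ioo (0:ℝ) 1 ×ˢ Ioo (0:ℝ) 1

variable {d : ℕ}

/-- Partial derivative in the `ℓ`-th θ-coordinate. -/
def pdθ (f : (Fin d → ℝ) → ℝ) (ℓ : Fin d) (θ : Fin d → ℝ) : ℝ :=
  deriv (fun t => f (Function.update θ ℓ t)) (θ ℓ)

/-- Second partial derivative in θ-coordinates `ℓ, ℓ'`. -/
def pdθ2 (f : (Fin d → ℝ) → ℝ) (ℓ ℓ' : Fin d) (θ : Fin d → ℝ) : ℝ :=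
  pdθ (pdθ f ℓ') ℓ θ

/-- Third partial derivative in θ-coordinates. -/
def pdθ3 (f : (Fin d → ℝ) → ℝ) (ℓ ℓ' ℓ'' : Fin d) (θ : Fin d → ℝ) : ℝ :=
  pdθ (pdθ (pdθ f ℓ'') ℓ') ℓ θ

/-- Partial derivative in the first `u`-coordinate. -/
def pdU1 (f : ℝ × ℝ → ℝ) (u : ℝ × ℝ) : ℝ := deriv (fun t => f (t, u.2)) u.1

/-- Partial derivative in the second `u`-coordinate. -/
def pdU2 (f : ℝ × ℝ → ℝ) (u : ℝ × ℝ) : ℝ := deriv (fun t => f (u.1, t)) u.2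

variable (φ : ℝ → ℝ) (c : (Fin d → ℝ) → ℝ × ℝ → ℝ)

/-- `K₁(θ,u) = φ'(1/c_θ(u))`. -/
def K1 (θ : Fin d → ℝ) (u : ℝ × ℝ) : ℝ := deriv φ (1 / c θ u)

/-- `K₂(θ,u) = φ'(1/c_θ(u))/c_θ(u) - φ(1/c_θ(u))`. -/
def K2 (θ : Fin d → ℝ) (u : ℝ × ℝ) : ℝ :=
  deriv φ (1 / c θ u) / c θ u - φ (1 / c θ u)

/-- The dual criterion `m(θ,u) = ∫_I φ'(1/c_θ) dλ - K₂(θ,u)`. -/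
def mFun (θ : Fin d → ℝ) (u : ℝ × ℝ) : ℝ :=
  (∫ v in Isq, K1 φ c θ v) - K2 φ c θ u

/-- The enlarged parameter space `Θ_e`. -/
def ThetaE : Set (Fin d → ℝ) :=
  {θ | IntegrableOn (fun v => |K1 φ c θ v|) Isq volume}

/-- The c.d.f. `C_θ(u) = ∫_{[0,u₁]×[0,u₂]} c_θ dλ` of the copula with density `c_θ`. -/
def copCdf (θ : Fin d → ℝ) (u : ℝ × ℝ) : ℝ :=
  ∫ v in Icc (0:ℝ) u.1 ×ˢ Icc (0:ℝ) u.2, c θ v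

/-- Integral against the copula measure `dC_θ = c_θ dλ` on `I`. -/
def intC (θ : Fin d → ℝ) (f : ℝ × ℝ → ℝ) : ℝ := ∫ u in Isq, f u * c θ u

/-- The matrix `-∫_I (∂²/∂θ²) m(θ_T,·) dC_{θ_T}` (as a function of indices). -/
def SmatFun (θT : Fin d → ℝ) (ℓ ℓ' : Fin d) : ℝ :=
  -∫ u in Isq, pdθ2 (fun θ => mFun φ c θ u) ℓ ℓ' θT * c θT u

/-- The matrix `S` of Theorem 1. -/
def Smat (θT : Fin d → ℝ) : Matrix (Fin d) (Fin d) ℝ := Matrix.of (SmatFun φ c θT)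

section Empirical

variable {Ω : Type*} [MeasurableSpace Ω] (X : ℕ → Ω → ℝ × ℝ)

/-- Empirical marginal distribution function of the first coordinate. -/
def empF1 (n : ℕ) (ω : Ω) (t : ℝ) : ℝ :=
  (n : ℝ)⁻¹ * ∑ k ∈ Finset.range n, if (X k ω).1 ≤ t then 1 else 0

/-- Empirical marginal distribution function of the second coordinate. -/
def empF2 (n : ℕ) (ω : Ω) (t : ℝ) : ℝ :=
  (n : ℝ)⁻¹ * ∑ k ∈ Finset.range n, if (X k ω).2 ≤ t then 1 else 0

/-- The pseudo-observations `(F_{1n}(X_{1k}), F_{2n}(X_{2k}))`. -/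
def pseudoObs (n : ℕ) (ω : Ω) (k : ℕ) : ℝ × ℝ :=
  (empF1 X n ω (X k ω).1, empF2 X n ω (X k ω).2)

/-- Integral `∫_I f dC_n` against the (modified) empirical copula `C_n`, i.e. the
average of `f` over the pseudo-observations. -/
def intCn (f : ℝ × ℝ → ℝ) (n : ℕ) (ω : Ω) : ℝ :=
  (n : ℝ)⁻¹ * ∑ k ∈ Finset.range n, f (pseudoObs X n ω k)

/-- The (modified) empirical copula `C_n`. -/
def empCop (n : ℕ) (ω : Ω) (u : ℝ × ℝ) : ℝ :=
  (n : ℝ)⁻¹ * ∑ k ∈ Finset.range n,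
    if (pseudoObs X n ω k).1 ≤ u.1 ∧ (pseudoObs X n ω k).2 ≤ u.2 then 1 else 0


/-- The true copula of the sample: `C(u) = P(F₁(X₁) ≤ u₁, F₂(X₂) ≤ u₂)`. -/
def copOf (P : Measure Ω) (F1 F2 : ℝ → ℝ) (u : ℝ × ℝ) : ℝ :=
  (P {ω | F1 (X 0 ω).1 ≤ u.1 ∧ F2 (X 0 ω).2 ≤ u.2}).toReal

/-- Integral `∫_I j dC` of `j` against the true copula of the sample. -/
def intCop (P : Measure Ω) (F1 F2 : ℝ → ℝ) (j : ℝ × ℝ → ℝ) : ℝ :=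
  ∫ ω, j (F1 (X 0 ω).1, F2 (X 0 ω).2) ∂P

/-- The joint empirical distribution function `F_n`. -/
def empJoint (n : ℕ) (ω : Ω) (x : ℝ × ℝ) : ℝ :=
  (n : ℝ)⁻¹ * ∑ k ∈ Finset.range n, if (X k ω).1 ≤ x.1 ∧ (X k ω).2 ≤ x.2 then 1 else 0

/-- Empirical quantile function of the first margin. -/
def empQuant1 (n : ℕ) (ω : Ω) (t : ℝ) : ℝ := sInf {x : ℝ | t ≤ empF1 X n ω x}

/-- Empirical quantile function of the second margin. -/
def empQuant2 (n : ℕ) (ω : Ω) (t : ℝ) : ℝ := sInf {x : ℝ | t ≤ empF2 X n ω x}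

/-- The Deheuvels empirical copula `𝔻_n(u) = F_n(F_{1n}⁻¹(u₁), F_{2n}⁻¹(u₂))`. -/
def deheuvelsCop (n : ℕ) (ω : Ω) (u : ℝ × ℝ) : ℝ :=
  empJoint X n ω (empQuant1 X n ω u.1, empQuant2 X n ω u.2)

/-- The influence function of Theorem 1(2): `(∂/∂θ)m(θ_T,F₁(X₁),F₂(X₂)) + W₁ + W₂`. -/
def gVec (θT : Fin d → ℝ) (F1 F2 : ℝ → ℝ) (ω : Ω) (ℓ : Fin d) : ℝ :=
  pdθ (fun θ => mFun φ c θ (F1 (X 0 ω).1, F2 (X 0 ω).2)) ℓ θT +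
    (∫ u in Isq, (if F1 (X 0 ω).1 ≤ u.1 then (1:ℝ) else 0) *
      pdU1 (fun v => pdθ (fun θ => mFun φ c θ v) ℓ θT) u * c θT u) +
    (∫ u in Isq, (if F2 (X 0 ω).2 ≤ u.2 then (1:ℝ) else 0) *
      pdU2 (fun v => pdθ (fun θ => mFun φ c θ v) ℓ θT) u * c θT u)

/-- The covariance matrix `M` of Theorem 1(2) (as a function of indices). -/
def MmatFun (P : Measure Ω) (θT : Fin d → ℝ) (F1 F2 : ℝ → ℝ) (ℓ ℓ' : Fin d) : ℝ :=
  ∫ ω, (gVec φ c X θT F1 F2 ω ℓ - ∫ ω', gVec φ c X θT F1 F2 ω' ℓ ∂P) *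
    (gVec φ c X θT F1 F2 ω ℓ' - ∫ ω', gVec φ c X θT F1 F2 ω' ℓ' ∂P) ∂P

/-- The influence function of Theorem 2(2): `m(θ_T,F₁(X₁),F₂(X₂)) + Y₁ + Y₂`. -/
def mInf (θT : Fin d → ℝ) (F1 F2 : ℝ → ℝ) (ω : Ω) : ℝ :=
  mFun φ c θT (F1 (X 0 ω).1, F2 (X 0 ω).2) +
    (∫ u in Isq, (if F1 (X 0 ω).1 ≤ u.1 then (1:ℝ) else 0) * pdU1 (mFun φ c θT) u * c θT u) +
    (∫ u in Isq, (if F2 (X 0 ω).2 ≤ u.2 then (1:ℝ) else 0) * pdU2 (mFun φ c θT) u * c θT u)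

/-- The estimator `D̂_φ(θ₀,θ_T) = sup_{θ ∈ Θ_e} ∫_I m(θ,·) dC_n`. -/
def Dhat (n : ℕ) (ω : Ω) : ℝ :=
  sSup ((fun θ : Fin d → ℝ => intCn X (mFun φ c θ) n ω) '' ThetaE φ c)

end Empirical

/-- Convergence in distribution (weak convergence of the laws) of a sequence of
random elements to the law `ν`. -/
def ConvInDist {Ω E : Type*} [MeasurableSpace Ω] [MeasurableSpace E] [TopologicalSpace E]
    (P : Measure Ω) (Y : ℕ → Ω → E) (ν : Measure E) : Prop :=
  ∀ f : BoundedContinuousFunction E ℝ,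
    Tendsto (fun n => ∫ ω, f (Y n ω) ∂P) atTop (𝓝 (∫ x, f x ∂ν))

/-- `ν` is the centered Gaussian law on `ℝ^d` with covariance matrix `Σ`:
every linear functional is one-dimensional centered Gaussian with the induced variance. -/
def IsCenteredGaussianCov (ν : Measure (Fin d → ℝ)) (Cov : Fin d → Fin d → ℝ) : Prop :=
  IsProbabilityMeasure ν ∧
    ∀ a : Fin d → ℝ,
      ν.map (fun x => ∑ i, a i * x i) =
        gaussianReal 0 (Real.toNNReal (∑ i, ∑ j, a i * Cov i j * a j))

/-- The chi-squared law with `k` degrees of freedom, defined through its density. -/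
def chiSqMeasure (k : ℕ) : Measure ℝ :=
  (volume.restrict (Ioi (0:ℝ))).withDensity fun x =>
    ENNReal.ofReal
      (x ^ ((k : ℝ) / 2 - 1) * Real.exp (-x / 2) /
        (2 ^ ((k : ℝ) / 2) * Real.Gamma ((k : ℝ) / 2)))

/-- A u-shaped function on `(0,1)`. -/
def UShaped (r : ℝ → ℝ) : Prop :=
  (∀ t ∈ Ioo (0:ℝ) 1, 0 < r t) ∧ (∀ t ∈ Ioo (0:ℝ) 1, r (1 - t) = r t) ∧
    MonotoneOn r (Ioc (0:ℝ) (1/2))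

/-- `r_β` for a u-shaped `r`. -/
def rBeta (r : ℝ → ℝ) (β t : ℝ) : ℝ :=
  if t ≤ 1/2 then r (β * t) else r (1 - β * (1 - t))

/-- Reproducing u-shaped functions: the class `R`. -/
def Reproducing (r : ℝ → ℝ) : Prop :=
  UShaped r ∧ ∃ β₀ > (0:ℝ), ∀ β ∈ Ioo (0:ℝ) β₀, ∃ M : ℝ,
    ∀ t ∈ Ioo (0:ℝ) 1, rBeta r β t ≤ M * r t

/-- The class `Q`. -/
def ClassQ (q : ℝ → ℝ) : Prop :=
  ContinuousOn q (Icc 0 1) ∧ (∀ t ∈ Ioo (0:ℝ) 1, 0 < q t) ∧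
    (∀ t ∈ Icc (0:ℝ) 1, q (1 - t) = q t) ∧ MonotoneOn q (Icc (0:ℝ) (1/2)) ∧
    IntegrableOn (fun t => ((q t) ^ 2)⁻¹) (Icc (0:ℝ) 1) volume

/-- Condition (C.1): on a neighborhood of `θ_T` contained in `Θ_e`, the maps
`θ ↦ φ'(1/c_θ(u))` are twice differentiable in each θ-coordinate and the first and second
partial derivatives are dominated by λ-integrable functions. -/
def CondC1 (θT : Fin d → ℝ) : Prop :=
  ∃ N ∈ 𝓝 θT, N ⊆ ThetaE φ c ∧
    (∀ u ∈ Isq, ∀ θ ∈ N, ∀ ℓ : Fin d,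
      DifferentiableAt ℝ (fun t => K1 φ c (Function.update θ ℓ t) u) (θ ℓ) ∧
      ∀ ℓ' : Fin d,
        DifferentiableAt ℝ
          (fun t => pdθ (fun θ' => K1 φ c θ' u) ℓ' (Function.update θ ℓ t)) (θ ℓ)) ∧
    ∃ g1 g2 : ℝ × ℝ → ℝ, IntegrableOn g1 Isq volume ∧ IntegrableOn g2 Isq volume ∧
      ∀ θ ∈ N, ∀ u ∈ Isq, ∀ ℓ ℓ' : Fin d,
        |pdθ (fun θ' => K1 φ c θ' u) ℓ θ| ≤ g1 u ∧
        |pdθ2 (fun θ' => K1 φ c θ' u) ℓ ℓ' θ| ≤ g2 u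

/-- Condition (C.2). -/
def CondC2 (θT : Fin d → ℝ) : Prop :=
  ∃ N ∈ 𝓝 θT, ∃ r1 r2 rt1 rt2 q1 q2 : ℝ → ℝ,
    Reproducing r1 ∧ Reproducing r2 ∧ Reproducing rt1 ∧ Reproducing rt2 ∧
    ClassQ q1 ∧ ClassQ q2 ∧
    (∀ θ ∈ N, ∀ ℓ : Fin d,
      ContDiffOn ℝ 1 (fun u => pdθ (fun θ' => mFun φ c θ' u) ℓ θ) IsqO) ∧
    (∀ θ ∈ N, ∀ u ∈ IsqO,
      -- (i) |∂m/∂θ_ℓ| ≤ r₁(u₁)r₂(u₂) and |∂²m/∂θ_ℓ∂u_i| ≤ r̃_i(u_i)r_j(u_j)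
      (∀ ℓ : Fin d,
        |pdθ (fun θ' => mFun φ c θ' u) ℓ θ| ≤ r1 u.1 * r2 u.2 ∧
        |pdU1 (fun v => pdθ (fun θ' => mFun φ c θ' v) ℓ θ) u| ≤ rt1 u.1 * r2 u.2 ∧
        |pdU2 (fun v => pdθ (fun θ' => mFun φ c θ' v) ℓ θ) u| ≤ rt2 u.2 * r1 u.1) ∧
      -- (ii) m² and (iv) |m|
      ((mFun φ c θ u) ^ 2 ≤ rt1 u.1 * r2 u.2 ∧ (mFun φ c θ u) ^ 2 ≤ rt2 u.2 * r1 u.1) ∧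
      (|mFun φ c θ u| ≤ rt1 u.1 * r2 u.2 ∧ |mFun φ c θ u| ≤ rt2 u.2 * r1 u.1) ∧
      -- (iii) third θ-derivatives of K₂
      (∀ ℓ ℓ' ℓ'' : Fin d,
        |pdθ3 (fun θ' => K2 φ c θ' u) ℓ ℓ' ℓ'' θ| ≤ rt1 u.1 * r2 u.2 ∧
        |pdθ3 (fun θ' => K2 φ c θ' u) ℓ ℓ' ℓ'' θ| ≤ rt2 u.2 * r1 u.1) ∧
      -- (v) |∂m/∂θ_ℓ|² and |∂²m/∂θ_ℓ∂θ_ℓ'|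
      (∀ ℓ ℓ' : Fin d,
        ((pdθ (fun θ' => mFun φ c θ' u) ℓ θ) ^ 2 ≤ rt1 u.1 * r2 u.2 ∧
          (pdθ (fun θ' => mFun φ c θ' u) ℓ θ) ^ 2 ≤ rt2 u.2 * r1 u.1) ∧
        (|pdθ2 (fun θ' => mFun φ c θ' u) ℓ ℓ' θ| ≤ rt1 u.1 * r2 u.2 ∧
          |pdθ2 (fun θ' => mFun φ c θ' u) ℓ ℓ' θ| ≤ rt2 u.2 * r1 u.1)) ∧
      -- (vi) |∂m/∂u_i|
      (|pdU1 (mFun φ c θ) u| ≤ rt1 u.1 * r2 u.2 ∧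
        |pdU2 (mFun φ c θ) u| ≤ rt2 u.2 * r1 u.1)) ∧
    IntegrableOn (fun u => (r1 u.1 * r2 u.2) ^ 2 * c θT u) Isq volume ∧
    IntegrableOn (fun u => q1 u.1 * rt1 u.1 * r2 u.2 * c θT u) Isq volume ∧
    IntegrableOn (fun u => q2 u.2 * rt2 u.2 * r1 u.1 * c θT u) Isq volume

/-- Condition (C.3): nonsingularity of `∫_I (∂²/∂θ²)m(θ_T,·) dC_{θ_T}`. -/
def CondC3 (θT : Fin d → ℝ) : Prop := (Smat φ c θT).det ≠ 0

/-- A continuous function on `I` of bounded variation in the Hardy–Krause sense: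
it induces a finite signed Borel measure on `I` and its edge restrictions are of
bounded variation. -/
def HKBV (j : ℝ × ℝ → ℝ) : Prop :=
  (∃ μ : SignedMeasure (ℝ × ℝ),
    ∀ u ∈ Isq, j u = j (u.1, 0) + j (0, u.2) - j (0, 0) +
      μ (Ioc (0:ℝ) u.1 ×ˢ Ioc (0:ℝ) u.2)) ∧
  BoundedVariationOn (fun t => j (t, 1)) (Icc (0:ℝ) 1) ∧
  BoundedVariationOn (fun t => j (1, t)) (Icc (0:ℝ) 1)

/-- Condition (C.4): each component of `(∂/∂θ)m(θ_T,·)` is continuous and of bounded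
variation on `I`. -/
def CondC4 (θT : Fin d → ℝ) : Prop :=
  ∀ ℓ : Fin d,
    ContinuousOn (fun u => pdθ (fun θ => mFun φ c θ u) ℓ θT) Isq ∧
    HKBV (fun u => pdθ (fun θ => mFun φ c θ u) ℓ θT)

/-- Condition (C.5). -/
def CondC5 (θ0 θT : Fin d → ℝ) : Prop :=
  (∀ ℓ : Fin d, ∀ u ∈ IsqO,
    Tendsto (fun θ => pdU1 (fun v => pdθ (fun θ' => mFun φ c θ' v) ℓ θ) u)
      (𝓝 θ0) (𝓝 0) ∧
    Tendsto (fun θ => pdU2 (fun v => pdθ (fun θ' => mFun φ c θ' v) ℓ θ) u)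
      (𝓝 θ0) (𝓝 0)) ∧
  ∃ M1 > (0:ℝ), ∃ δ1 > (0:ℝ), ∃ N ∈ 𝓝 θ0, ∀ θ ∈ N, ∀ u ∈ IsqO, ∀ ℓ : Fin d,
    |pdU1 (fun v => pdθ (fun θ' => mFun φ c θ' v) ℓ θ) u * c θT u| <
      M1 * (u.1 * (1 - u.1)) ^ (-1.5 + δ1 : ℝ) * (u.2 * (1 - u.2)) ^ (0.5 + δ1 : ℝ) ∧
    |pdU2 (fun v => pdθ (fun θ' => mFun φ c θ' v) ℓ θ) u * c θT u| <
      M1 * (u.2 * (1 - u.2)) ^ (-1.5 + δ1 : ℝ) * (u.1 * (1 - u.1)) ^ (0.5 + δ1 : ℝ)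

end Copula

namespace StmtAux
open Copula

/-! ### Elementary helpers -/

noncomputable def clamp (t : ℝ) : ℝ := max 0 (min 1 t)

lemma clamp_mono : Monotone clamp := fun a b hab =>
  max_le_max le_rfl (min_le_min le_rfl hab)

lemma clamp_mem (t : ℝ) : clamp t ∈ Icc (0:ℝ) 1 :=
  ⟨le_max_left _ _, max_le zero_le_one (min_le_left _ _)⟩

lemma clamp_eq {t : ℝ} (h : t ∈ Icc (0:ℝ) 1) : clamp t = t := by
  have h1 : min 1 t = t := min_eq_right h.2
  rw [clamp, h1, max_eq_right h.1]

lemma clamp_cont : Continuous clamp :=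
  continuous_const.max (continuous_const.min continuous_id)

def aLL (u : ℝ × ℝ) : Set (ℝ × ℝ) := {v | v.1 ≤ u.1 ∧ v.2 ≤ u.2}

lemma aLL_meas (u : ℝ × ℝ) : MeasurableSet (aLL u) :=
  (measurableSet_le measurable_fst measurable_const).inter
    (measurableSet_le measurable_snd measurable_const)

lemma Isq_meas : MeasurableSet Isq :=
  measurableSet_Icc.prod measurableSet_Icc

lemma meas_congr_null {α : Type*} [MeasurableSpace α] (m : Measure α) {s t N : Set α}
    (hN : m N = 0) (h1 : s ⊆ t ∪ N) (h2 : t ⊆ s ∪ N) : m s = m t :=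
  le_antisymm ((measure_mono h1).trans ((measure_union_le t N).trans (by rw [hN, add_zero])))
    ((measure_mono h2).trans ((measure_union_le s N).trans (by rw [hN, add_zero])))

lemma prob_toReal_le_one {α : Type*} [MeasurableSpace α] (m : Measure α)
    [IsProbabilityMeasure m] (s : Set α) : (m s).toReal ≤ 1 := by
  have := ENNReal.toReal_mono (by simp) (prob_le_one (μ := m) (s := s))
  simpa using this

/-! ### The approximating sequence -/

noncomputable def bseq (a : ℝ) (k : ℕ) : ℝ := a - a / ((k : ℝ) + 2)

lemma bseq_nonneg {a : ℝ} (ha : 0 < a) (k : ℕ) : 0 ≤ bseq a k := by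
  have hk0 : (0:ℝ) ≤ (k : ℝ) := Nat.cast_nonneg k
  have h2 : (1:ℝ) ≤ (k : ℝ) + 2 := by linarith
  have := div_le_self ha.le h2
  rw [bseq]; linarith

lemma bseq_lt {a : ℝ} (ha : 0 < a) (k : ℕ) : bseq a k < a := by
  have : 0 < a / ((k:ℝ) + 2) := by positivity
  rw [bseq]; linarith

lemma bseq_mono {a : ℝ} (ha : 0 < a) : Monotone (bseq a) := by
  intro k l hkl
  have hk2 : (0:ℝ) < (k:ℝ) + 2 := by positivity
  have hkl' : (k:ℝ) + 2 ≤ (l:ℝ) + 2 := by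
    have : (k:ℝ) ≤ l := by exact_mod_cast hkl
    linarith
  have := div_le_div_of_nonneg_left ha.le hk2 hkl'
  rw [bseq, bseq]; linarith

lemma le_bseq {a t : ℝ} (h0 : 0 < a) (ht : t < a) : ∃ k, t ≤ bseq a k := by
  obtain ⟨k, hk⟩ := exists_nat_ge (a / (a - t))
  refine ⟨k, ?_⟩
  have hat : 0 < a - t := by linarith
  have hk2 : (0:ℝ) < (k:ℝ) + 2 := by positivity
  have h2 : a / (a - t) ≤ (k:ℝ) + 2 := hk.trans (by linarith)
  have h3 : a ≤ ((k:ℝ) + 2) * (a - t) := by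
    have := (div_le_iff₀ hat).mp h2
    linarith
  have : a / ((k:ℝ)+2) ≤ a - t := (div_le_iff₀ hk2).mpr (by linarith)
  rw [bseq]; linarith

lemma lim_bound {α : Type*} [MeasurableSpace α] (κ₁ κ₂ : Measure α)
    [IsFiniteMeasure κ₁] [IsFiniteMeasure κ₂] {S : ℝ} (E : ℕ → Set α) (hE : Monotone E)
    (h : ∀ k, |(κ₁ (E k)).toReal - (κ₂ (E k)).toReal| ≤ S) :
    |(κ₁ (⋃ k, E k)).toReal - (κ₂ (⋃ k, E k)).toReal| ≤ S := by
  have t1 : Tendsto (fun k => (κ₁ (E k)).toReal) atTop (𝓝 ((κ₁ (⋃ k, E k)).toReal)) :=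
    (ENNReal.tendsto_toReal (measure_ne_top _ _)).comp (tendsto_measure_iUnion_atTop hE)
  have t2 : Tendsto (fun k => (κ₂ (E k)).toReal) atTop (𝓝 ((κ₂ (⋃ k, E k)).toReal)) :=
    (ENNReal.tendsto_toReal (measure_ne_top _ _)).comp (tendsto_measure_iUnion_atTop hE)
  exact le_of_tendsto ((t1.sub t2).abs) (Eventually.of_forall h)

/-! ### The strict corner bound -/

lemma strict2 (κ₁ κ₂ : Measure (ℝ × ℝ)) [IsFiniteMeasure κ₁] [IsFiniteMeasure κ₂]
    (h₁ : κ₁ Isqᶜ = 0) (h₂ : κ₂ Isqᶜ = 0) {S : ℝ}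
    (hS : ∀ u ∈ Isq, |(κ₁ (aLL u)).toReal - (κ₂ (aLL u)).toReal| ≤ S)
    {w : ℝ × ℝ} (hw1 : 0 < w.1) (hw1' : w.1 ≤ 1) (hw2 : 0 < w.2) (hw2' : w.2 ≤ 1) :
    |(κ₁ {v : ℝ × ℝ | v.1 < w.1 ∧ v.2 < w.2}).toReal -
      (κ₂ {v : ℝ × ℝ | v.1 < w.1 ∧ v.2 < w.2}).toReal| ≤ S := by
  set E : ℕ → Set (ℝ × ℝ) := fun k => aLL (bseq w.1 k, bseq w.2 k) with hE
  have hEmono : Monotone E := by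
    intro k l hkl
    intro v hv
    exact ⟨hv.1.trans (bseq_mono hw1 hkl), hv.2.trans (bseq_mono hw2 hkl)⟩
  have hcover : ∀ (κ : Measure (ℝ × ℝ)), κ Isqᶜ = 0 →
      κ {v : ℝ × ℝ | v.1 < w.1 ∧ v.2 < w.2} = κ (⋃ k, E k) := by
    intro κ hκ
    refine meas_congr_null κ hκ ?_ ?_
    · intro v hv
      by_cases hvI : v ∈ Isq
      · left
        obtain ⟨k1, hk1⟩ := le_bseq hw1 hv.1
        obtain ⟨k2, hk2⟩ := le_bseq hw2 hv.2
        refine mem_iUnion.mpr ⟨max k1 k2, ?_, ?_⟩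
        · exact hk1.trans (bseq_mono hw1 (le_max_left _ _))
        · exact hk2.trans (bseq_mono hw2 (le_max_right _ _))
      · exact Or.inr hvI
    · intro v hv
      obtain ⟨k, hk⟩ := mem_iUnion.mp hv
      exact Or.inl ⟨lt_of_le_of_lt hk.1 (bseq_lt hw1 k), lt_of_le_of_lt hk.2 (bseq_lt hw2 k)⟩
  rw [hcover κ₁ h₁, hcover κ₂ h₂]
  refine lim_bound κ₁ κ₂ E hEmono (fun k => ?_)
  exact hS (bseq w.1 k, bseq w.2 k)
    ⟨⟨bseq_nonneg hw1 k, (bseq_lt hw1 k).le.trans hw1'⟩,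
      ⟨bseq_nonneg hw2 k, (bseq_lt hw2 k).le.trans hw2'⟩⟩

/-! ### Lower sets in ℝ and the one-dimensional bound -/

lemma lower_rep {L : Set ℝ} (hL : IsLowerSet L) :
    (∀ t ∈ Icc (0:ℝ) 1, t ∉ L) ∨
      ∃ a ∈ Icc (0:ℝ) 1, (∀ t ∈ Icc (0:ℝ) 1, t ∈ L ↔ t ≤ a) ∨
        (∀ t ∈ Icc (0:ℝ) 1, t ∈ L ↔ t < a) := by
  by_cases hne : ∃ t ∈ Icc (0:ℝ) 1, t ∈ L
  · obtain ⟨t0, ht0, ht0L⟩ := hne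
    have hA : (L ∩ Icc (0:ℝ) 1).Nonempty := ⟨t0, ht0L, ht0⟩
    have hAbdd : BddAbove (L ∩ Icc (0:ℝ) 1) := ⟨1, fun x hx => hx.2.2⟩
    set a := sSup (L ∩ Icc (0:ℝ) 1) with ha
    have ha1 : a ≤ 1 := csSup_le hA (fun x hx => hx.2.2)
    have ha0 : 0 ≤ a := le_trans ht0.1 (le_csSup hAbdd ⟨ht0L, ht0⟩)
    right
    refine ⟨a, ⟨ha0, ha1⟩, ?_⟩
    by_cases haL : a ∈ L
    · left
      intro t ht
      constructor
      · intro htL; exact le_csSup hAbdd ⟨htL, ht⟩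
      · intro hta; exact hL hta haL
    · right
      intro t ht
      constructor
      · intro htL
        have hta : t ≤ a := le_csSup hAbdd ⟨htL, ht⟩
        rcases lt_or_eq_of_le hta with h | h
        · exact h
        · exact absurd (h ▸ htL) haL
      · intro hta
        obtain ⟨b, hb, htb⟩ := exists_lt_of_lt_csSup hA hta
        exact hL htb.le hb.1
  · left; intro t ht htL; exact hne ⟨t, ht, htL⟩

lemma oneD_lower (m₁ m₂ : Measure ℝ) [IsFiniteMeasure m₁] [IsFiniteMeasure m₂]
    (h₁ : m₁ (Icc (0:ℝ) 1)ᶜ = 0) (h₂ : m₂ (Icc (0:ℝ) 1)ᶜ = 0) {S : ℝ} (hS0 : 0 ≤ S)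
    (hS : ∀ a ∈ Icc (0:ℝ) 1, |(m₁ (Iic a)).toReal - (m₂ (Iic a)).toReal| ≤ S)
    {L : Set ℝ} (hL : IsLowerSet L) :
    |(m₁ L).toReal - (m₂ L).toReal| ≤ S := by
  rcases lower_rep hL with hrep | ⟨a, ha, hrep | hrep⟩
  · have e : ∀ (m : Measure ℝ), m (Icc (0:ℝ) 1)ᶜ = 0 → m L = 0 := by
      intro m hm
      refine measure_mono_null (fun t ht => ?_) hm
      intro htI
      exact hrep t htI ht
    rw [e m₁ h₁, e m₂ h₂]
    simpa using hS0
  · have e : ∀ (m : Measure ℝ), m (Icc (0:ℝ) 1)ᶜ = 0 → m L = m (Iic a) := by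
      intro m hm
      refine meas_congr_null m hm ?_ ?_
      · intro t ht
        by_cases htI : t ∈ Icc (0:ℝ) 1
        · exact Or.inl ((hrep t htI).mp ht)
        · exact Or.inr htI
      · intro t ht
        by_cases htI : t ∈ Icc (0:ℝ) 1
        · exact Or.inl ((hrep t htI).mpr ht)
        · exact Or.inr htI
    rw [e m₁ h₁, e m₂ h₂]
    exact hS a ha
  · rcases eq_or_lt_of_le ha.1 with h0a | h0a
    · -- a = 0 : within [0,1], membership in L is impossible
      have e : ∀ (m : Measure ℝ), m (Icc (0:ℝ) 1)ᶜ = 0 → m L = 0 := by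
        intro m hm
        refine measure_mono_null (fun t ht => ?_) hm
        intro htI
        have h1' := (hrep t htI).mp ht
        have h2' := htI.1
        rw [← h0a] at h1'
        linarith
      rw [e m₁ h₁, e m₂ h₂]
      simpa using hS0
    · set E : ℕ → Set ℝ := fun k => Iic (bseq a k) with hE
      have hEmono : Monotone E := fun k l hkl => Iic_subset_Iic.mpr (bseq_mono h0a hkl)
      have e : ∀ (m : Measure ℝ), m (Icc (0:ℝ) 1)ᶜ = 0 → m L = m (⋃ k, E k) := by
        intro m hm
        refine meas_congr_null m hm ?_ ?_
        · intro t ht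
          by_cases htI : t ∈ Icc (0:ℝ) 1
          · left
            obtain ⟨k, hk⟩ := le_bseq h0a ((hrep t htI).mp ht)
            exact mem_iUnion.mpr ⟨k, hk⟩
          · exact Or.inr htI
        · intro t ht
          obtain ⟨k, hk⟩ := mem_iUnion.mp ht
          by_cases htI : t ∈ Icc (0:ℝ) 1
          · exact Or.inl ((hrep t htI).mpr (lt_of_le_of_lt hk (bseq_lt h0a k)))
          · exact Or.inr htI
      rw [e m₁ h₁, e m₂ h₂]
      refine lim_bound m₁ m₂ E hEmono (fun k => ?_)
      exact hS (bseq a k) ⟨bseq_nonneg h0a k, (bseq_lt h0a k).le.trans ha.2⟩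

/-! ### The one-dimensional integral bound -/

lemma oneD (m₁ m₂ : Measure ℝ) [IsProbabilityMeasure m₁] [IsProbabilityMeasure m₂]
    (h₁ : m₁ (Icc (0:ℝ) 1)ᶜ = 0) (h₂ : m₂ (Icc (0:ℝ) 1)ᶜ = 0) {S : ℝ} (hS0 : 0 ≤ S)
    (hS : ∀ a ∈ Icc (0:ℝ) 1, |(m₁ (Iic a)).toReal - (m₂ (Iic a)).toReal| ≤ S)
    (g : ℝ → ℝ) (hg : Monotone g) :
    |∫ t, g t ∂m₁ - ∫ t, g t ∂m₂| ≤ S * (g 1 - g 0) := by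
  have hg01 : g 0 ≤ g 1 := hg zero_le_one
  have hgm : Measurable g := hg.measurable
  set T : Set (ℝ × ℝ) := {p | g 0 < p.2 ∧ p.2 < g p.1} with hT
  have hTm : MeasurableSet T :=
    (measurableSet_lt measurable_const measurable_snd).inter
      (measurableSet_lt measurable_snd (hgm.comp measurable_fst))
  -- first representation
  have repr : ∀ (m : Measure ℝ), ∀ (_ : IsProbabilityMeasure m), m (Icc (0:ℝ) 1)ᶜ = 0 →
      ∫ t, g t ∂m = g 0 + ((m.prod volume) T).toReal := by
    intro m hmP hm
    have hae : ∀ᵐ t ∂m, t ∈ Icc (0:ℝ) 1 := by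
      rw [ae_iff]
      exact hm
    have hint : Integrable g m := by
      refine Integrable.mono' (integrable_const (max |g 0| |g 1|))
        hgm.aestronglyMeasurable ?_
      filter_upwards [hae] with t ht
      have a1 : g 0 ≤ g t := hg ht.1
      have a2 : g t ≤ g 1 := hg ht.2
      have b1 : |g 0| ≤ max |g 0| |g 1| := le_max_left _ _
      have b2 : |g 1| ≤ max |g 0| |g 1| := le_max_right _ _
      have c1 : -|g 0| ≤ g 0 := neg_abs_le _
      have c2 : g 1 ≤ |g 1| := le_abs_self _
      rw [Real.norm_eq_abs, abs_le]
      exact ⟨by linarith, by linarith⟩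
    have hprod : (m.prod volume) T = ∫⁻ t, ENNReal.ofReal (g t - g 0) ∂m := by
      rw [Measure.prod_apply hTm]
      refine lintegral_congr fun t => ?_
      have hpre : Prod.mk t ⁻¹' T = Ioo (g 0) (g t) := by
        ext y; simp [hT, mem_Ioo]
      rw [hpre, Real.volume_Ioo]
    have hnn : 0 ≤ᵐ[m] fun t => g t - g 0 := by
      filter_upwards [hae] with t ht
      have := hg ht.1
      simp only [Pi.zero_apply]
      linarith
    have h3 : ∫ t, (g t - g 0) ∂m = ((m.prod volume) T).toReal := by
      rw [hprod]
      exact integral_eq_lintegral_of_nonneg_ae hnn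
        ((hgm.sub measurable_const).aestronglyMeasurable)
    have h4 : ∫ t, (g t - g 0) ∂m = ∫ t, g t ∂m - g 0 := by
      rw [integral_sub hint (integrable_const _)]
      simp [measure_univ]
    rw [← h3, h4]; ring
  -- second representation
  have hFmeas : ∀ (m : Measure ℝ), ∀ (_ : SFinite m),
      Measurable (fun y => (m {t : ℝ | g 0 < y ∧ y < g t}).toReal) := by
    intro m _
    have := measurable_measure_prodMk_right (μ := m) hTm
    exact this.ennreal_toReal
  have hrepr2 : ∀ (m : Measure ℝ), ∀ (_ : IsProbabilityMeasure m),
      ((m.prod volume) T).toReal = ∫ y, (m {t : ℝ | g 0 < y ∧ y < g t}).toReal := by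
    intro m hmP
    rw [Measure.prod_apply_symm hTm,
      ← integral_toReal (measurable_measure_prodMk_right (μ := m) hTm).aemeasurable
        (ae_of_all _ fun y => measure_lt_top m _)]
    rfl
  have hFvanish : ∀ (m : Measure ℝ), m (Icc (0:ℝ) 1)ᶜ = 0 → ∀ y, y ∉ Ioc (g 0) (g 1) →
      (m {t : ℝ | g 0 < y ∧ y < g t}).toReal = 0 := by
    intro m hm y hy
    rcases not_and_or.mp hy with hy1 | hy2
    · push_neg at hy1
      have : {t : ℝ | g 0 < y ∧ y < g t} = ∅ := by
        ext t; simp only [mem_setOf_eq, mem_empty_iff_false, iff_false, not_and]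
        intro h; exact absurd h (not_lt.mpr hy1)
      rw [this]; simp
    · push_neg at hy2
      have : m {t : ℝ | g 0 < y ∧ y < g t} = 0 := by
        refine measure_mono_null (fun t ht => ?_) hm
        intro htI
        have := hg htI.2
        have := ht.2
        linarith
      rw [this]; simp
  have hFint : ∀ (m : Measure ℝ), ∀ (_ : IsProbabilityMeasure m), m (Icc (0:ℝ) 1)ᶜ = 0 →
      Integrable (fun y => (m {t : ℝ | g 0 < y ∧ y < g t}).toReal) volume := by
    intro m hmP hm
    have hindint : Integrable (Set.indicator (Ioc (g 0) (g 1)) fun _ => (1:ℝ)) volume := by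
      rw [integrable_indicator_iff measurableSet_Ioc]
      refine integrableOn_const ?_
      rw [Real.volume_Ioc]; exact ENNReal.ofReal_ne_top
    refine Integrable.mono' hindint
      (hFmeas m inferInstance).aestronglyMeasurable (ae_of_all _ fun y => ?_)
    by_cases hy : y ∈ Ioc (g 0) (g 1)
    · rw [Real.norm_eq_abs, abs_of_nonneg ENNReal.toReal_nonneg, indicator_of_mem hy]
      exact prob_toReal_le_one m _
    · rw [Real.norm_eq_abs, hFvanish m hm y hy, indicator_of_notMem hy, abs_zero]
  have key : ∫ t, g t ∂m₁ - ∫ t, g t ∂m₂ =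
      ∫ y, ((m₁ {t : ℝ | g 0 < y ∧ y < g t}).toReal -
        (m₂ {t : ℝ | g 0 < y ∧ y < g t}).toReal) := by
    rw [repr m₁ inferInstance h₁, repr m₂ inferInstance h₂, hrepr2 m₁ inferInstance,
      hrepr2 m₂ inferInstance, integral_sub (hFint m₁ inferInstance h₁)
      (hFint m₂ inferInstance h₂)]
    ring
  rw [key]
  have hpt : ∀ y, |(m₁ {t : ℝ | g 0 < y ∧ y < g t}).toReal -
      (m₂ {t : ℝ | g 0 < y ∧ y < g t}).toReal| ≤
      Set.indicator (Ioc (g 0) (g 1)) (fun _ => S) y := by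
    intro y
    by_cases hy : y ∈ Ioc (g 0) (g 1)
    · rw [indicator_of_mem hy]
      have hUym : MeasurableSet {t : ℝ | y < g t} :=
        measurableSet_lt measurable_const hgm
      have hUy : ∀ (m : Measure ℝ), ∀ (_ : IsProbabilityMeasure m),
          (m {t : ℝ | g 0 < y ∧ y < g t}).toReal = 1 - (m {t : ℝ | y < g t}ᶜ).toReal := by
        intro m hmP
        have hset : {t : ℝ | g 0 < y ∧ y < g t} = {t : ℝ | y < g t} := by
          ext t; simp [hy.1]
        rw [hset]
        have hadd : m {t : ℝ | y < g t} + m {t : ℝ | y < g t}ᶜ = 1 := by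
          rw [measure_add_measure_compl hUym, measure_univ]
        have : (m {t : ℝ | y < g t}).toReal + (m {t : ℝ | y < g t}ᶜ).toReal = 1 := by
          rw [← ENNReal.toReal_add (measure_ne_top _ _) (measure_ne_top _ _), hadd]
          simp
        linarith
      rw [hUy m₁ inferInstance, hUy m₂ inferInstance]
      have hlow : IsLowerSet ({t : ℝ | y < g t}ᶜ) := by
        intro s t hts hs
        simp only [mem_compl_iff, mem_setOf_eq, not_lt] at hs ⊢
        exact (hg hts).trans hs
      have := oneD_lower m₁ m₂ h₁ h₂ hS0 hS hlow
      calc |1 - (m₁ {t : ℝ | y < g t}ᶜ).toReal - (1 - (m₂ {t : ℝ | y < g t}ᶜ).toReal)|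
          = |(m₂ {t : ℝ | y < g t}ᶜ).toReal - (m₁ {t : ℝ | y < g t}ᶜ).toReal| := by
            congr 1; ring
        _ ≤ S := by rw [abs_sub_comm]; exact this
    · rw [indicator_of_notMem hy, hFvanish m₁ h₁ y hy, hFvanish m₂ h₂ y hy]
      simpa using hS0
  calc |∫ y, ((m₁ {t : ℝ | g 0 < y ∧ y < g t}).toReal -
        (m₂ {t : ℝ | g 0 < y ∧ y < g t}).toReal)|
      ≤ ∫ y, |(m₁ {t : ℝ | g 0 < y ∧ y < g t}).toReal -
        (m₂ {t : ℝ | g 0 < y ∧ y < g t}).toReal| :=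
        by simpa [Real.norm_eq_abs] using
          norm_integral_le_integral_norm (μ := volume) (fun y =>
            (m₁ {t : ℝ | g 0 < y ∧ y < g t}).toReal - (m₂ {t : ℝ | g 0 < y ∧ y < g t}).toReal)
    _ ≤ ∫ y, Set.indicator (Ioc (g 0) (g 1)) (fun _ => S) y :=
        integral_mono ((hFint m₁ inferInstance h₁).sub (hFint m₂ inferInstance h₂)).abs
          (by rw [integrable_indicator_iff measurableSet_Ioc]
              refine integrableOn_const ?_
              rw [Real.volume_Ioc]; exact ENNReal.ofReal_ne_top) hpt
    _ = S * (g 1 - g 0) := by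
        rw [integral_indicator_const S measurableSet_Ioc, Real.volume_real_Ioc,
          max_eq_left (by linarith), smul_eq_mul]
        ring

/-! ### The two-dimensional (signed measure) part -/

lemma bdd_meas_integrable {α : Type*} [MeasurableSpace α] (κ : Measure α) [IsFiniteMeasure κ]
    (f : α → ℝ) (hf : Measurable f) (C : ℝ) (hC : ∀ v, |f v| ≤ C) : Integrable f κ :=
  Integrable.mono' (integrable_const C) hf.aestronglyMeasurable
    (ae_of_all _ fun v => by rw [Real.norm_eq_abs]; exact hC v)

def Sl0 : Set ((ℝ × ℝ) × (ℝ × ℝ)) :=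
  {vw | 0 < vw.2.1 ∧ vw.2.1 ≤ vw.1.1 ∧ 0 < vw.2.2 ∧ vw.2.2 ≤ vw.1.2}

def Sl1 : Set ((ℝ × ℝ) × (ℝ × ℝ)) :=
  {vw | 0 < vw.2.1 ∧ vw.2.1 ≤ vw.1.1 ∧ 0 < vw.2.2 ∧ vw.2.2 ≤ 1}

def Sl2 : Set ((ℝ × ℝ) × (ℝ × ℝ)) :=
  {vw | 0 < vw.2.1 ∧ vw.2.1 ≤ 1 ∧ 0 < vw.2.2 ∧ vw.2.2 ≤ vw.1.2}

lemma mw1 : Measurable fun vw : (ℝ × ℝ) × (ℝ × ℝ) => vw.2.1 := measurable_fst.comp measurable_snd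
lemma mw2 : Measurable fun vw : (ℝ × ℝ) × (ℝ × ℝ) => vw.2.2 := measurable_snd.comp measurable_snd
lemma mv1 : Measurable fun vw : (ℝ × ℝ) × (ℝ × ℝ) => vw.1.1 := measurable_fst.comp measurable_fst
lemma mv2 : Measurable fun vw : (ℝ × ℝ) × (ℝ × ℝ) => vw.1.2 := measurable_snd.comp measurable_fst

lemma Sl0_meas : MeasurableSet Sl0 :=
  (measurableSet_lt measurable_const mw1).inter ((measurableSet_le mw1 mv1).inter
    ((measurableSet_lt measurable_const mw2).inter (measurableSet_le mw2 mv2)))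

lemma Sl1_meas : MeasurableSet Sl1 :=
  (measurableSet_lt measurable_const mw1).inter ((measurableSet_le mw1 mv1).inter
    ((measurableSet_lt measurable_const mw2).inter (measurableSet_le mw2 measurable_const)))

lemma Sl2_meas : MeasurableSet Sl2 :=
  (measurableSet_lt measurable_const mw1).inter ((measurableSet_le mw1 measurable_const).inter
    ((measurableSet_lt measurable_const mw2).inter (measurableSet_le mw2 mv2)))

lemma pre0 (v : ℝ × ℝ) : Prod.mk v ⁻¹' Sl0 = Ioc (0:ℝ) v.1 ×ˢ Ioc (0:ℝ) v.2 := by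
  ext w; simp only [Sl0, mem_preimage, mem_setOf_eq, Set.mem_prod, mem_Ioc]; tauto

lemma pre1 (v : ℝ × ℝ) : Prod.mk v ⁻¹' Sl1 = Ioc (0:ℝ) v.1 ×ˢ Ioc (0:ℝ) 1 := by
  ext w; simp only [Sl1, mem_preimage, mem_setOf_eq, Set.mem_prod, mem_Ioc]; tauto

lemma pre2 (v : ℝ × ℝ) : Prod.mk v ⁻¹' Sl2 = Ioc (0:ℝ) 1 ×ˢ Ioc (0:ℝ) v.2 := by
  ext w; simp only [Sl2, mem_preimage, mem_setOf_eq, Set.mem_prod, mem_Ioc]; tauto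

lemma jordan_apply (μ : SignedMeasure (ℝ × ℝ)) {E : Set (ℝ × ℝ)} (hE : MeasurableSet E) :
    μ E = (μ.toJordanDecomposition.posPart E).toReal -
      (μ.toJordanDecomposition.negPart E).toReal := by
  conv_lhs => rw [← μ.toSignedMeasure_toJordanDecomposition]
  rw [JordanDecomposition.toSignedMeasure, VectorMeasure.sub_apply,
    Measure.toSignedMeasure_apply_measurable hE, Measure.toSignedMeasure_apply_measurable hE]
  rfl

def Bfun (μ : SignedMeasure (ℝ × ℝ)) (v : ℝ × ℝ) : ℝ :=
  μ (Ioc (0:ℝ) v.1 ×ˢ Ioc (0:ℝ) v.2) - μ (Ioc (0:ℝ) v.1 ×ˢ Ioc (0:ℝ) 1) -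
    μ (Ioc (0:ℝ) 1 ×ˢ Ioc (0:ℝ) v.2)

lemma Bfun_eq (μ : SignedMeasure (ℝ × ℝ)) (v : ℝ × ℝ) :
    Bfun μ v =
      ((μ.toJordanDecomposition.posPart (Prod.mk v ⁻¹' Sl0)).toReal -
        (μ.toJordanDecomposition.negPart (Prod.mk v ⁻¹' Sl0)).toReal) -
      ((μ.toJordanDecomposition.posPart (Prod.mk v ⁻¹' Sl1)).toReal -
        (μ.toJordanDecomposition.negPart (Prod.mk v ⁻¹' Sl1)).toReal) -
      ((μ.toJordanDecomposition.posPart (Prod.mk v ⁻¹' Sl2)).toReal -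
        (μ.toJordanDecomposition.negPart (Prod.mk v ⁻¹' Sl2)).toReal) := by
  rw [pre0, pre1, pre2, Bfun,
    jordan_apply μ (measurableSet_Ioc.prod measurableSet_Ioc),
    jordan_apply μ (measurableSet_Ioc.prod measurableSet_Ioc),
    jordan_apply μ (measurableSet_Ioc.prod measurableSet_Ioc)]

lemma slice_integrable (κ ρ : Measure (ℝ × ℝ)) [IsFiniteMeasure κ] [IsFiniteMeasure ρ]
    {Ss : Set ((ℝ × ℝ) × (ℝ × ℝ))} (hSs : MeasurableSet Ss) :
    Integrable (fun v => (ρ (Prod.mk v ⁻¹' Ss)).toReal) κ :=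
  bdd_meas_integrable κ _ (measurable_measure_prodMk_left hSs).ennreal_toReal
    (ρ univ).toReal (fun v => by
      rw [abs_of_nonneg ENNReal.toReal_nonneg]
      exact ENNReal.toReal_mono (measure_ne_top _ _) (measure_mono (subset_univ _)))

lemma slice_integrable' (κ ρ : Measure (ℝ × ℝ)) [IsFiniteMeasure κ] [IsFiniteMeasure ρ]
    {Ss : Set ((ℝ × ℝ) × (ℝ × ℝ))} (hSs : MeasurableSet Ss) :
    Integrable (fun w => (κ ((fun v => (v, w)) ⁻¹' Ss)).toReal) ρ :=
  bdd_meas_integrable ρ _ (measurable_measure_prodMk_right hSs).ennreal_toReal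
    (κ univ).toReal (fun w => by
      rw [abs_of_nonneg ENNReal.toReal_nonneg]
      exact ENNReal.toReal_mono (measure_ne_top _ _) (measure_mono (subset_univ _)))

lemma Bfun_integrable (κ : Measure (ℝ × ℝ)) [IsFiniteMeasure κ] (μ : SignedMeasure (ℝ × ℝ)) :
    Integrable (Bfun μ) κ := by
  have : Bfun μ = fun v =>
      ((μ.toJordanDecomposition.posPart (Prod.mk v ⁻¹' Sl0)).toReal -
        (μ.toJordanDecomposition.negPart (Prod.mk v ⁻¹' Sl0)).toReal) -
      ((μ.toJordanDecomposition.posPart (Prod.mk v ⁻¹' Sl1)).toReal -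
        (μ.toJordanDecomposition.negPart (Prod.mk v ⁻¹' Sl1)).toReal) -
      ((μ.toJordanDecomposition.posPart (Prod.mk v ⁻¹' Sl2)).toReal -
        (μ.toJordanDecomposition.negPart (Prod.mk v ⁻¹' Sl2)).toReal) := funext (Bfun_eq μ)
  rw [this]
  exact (((slice_integrable κ _ Sl0_meas).sub (slice_integrable κ _ Sl0_meas)).sub
    ((slice_integrable κ _ Sl1_meas).sub (slice_integrable κ _ Sl1_meas))).sub
    ((slice_integrable κ _ Sl2_meas).sub (slice_integrable κ _ Sl2_meas))

lemma flip_int (κ ρ : Measure (ℝ × ℝ)) [IsProbabilityMeasure κ] [IsFiniteMeasure ρ]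
    {Ss : Set ((ℝ × ℝ) × (ℝ × ℝ))} (hSs : MeasurableSet Ss) :
    ∫ v, (ρ (Prod.mk v ⁻¹' Ss)).toReal ∂κ =
      ∫ w, (κ ((fun v => (v, w)) ⁻¹' Ss)).toReal ∂ρ := by
  have e1 : ∫ v, (ρ (Prod.mk v ⁻¹' Ss)).toReal ∂κ = ((κ.prod ρ) Ss).toReal := by
    rw [Measure.prod_apply hSs,
      ← integral_toReal (measurable_measure_prodMk_left hSs).aemeasurable
        (ae_of_all _ fun v => measure_lt_top ρ _)]
  rw [e1, Measure.prod_apply_symm hSs,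
    ← integral_toReal (measurable_measure_prodMk_right hSs).aemeasurable
      (ae_of_all _ fun w => measure_lt_top κ _)]

lemma Bpart (κ₁ κ₂ : Measure (ℝ × ℝ)) [IsProbabilityMeasure κ₁] [IsProbabilityMeasure κ₂]
    (h₁ : κ₁ Isqᶜ = 0) (h₂ : κ₂ Isqᶜ = 0) {S : ℝ} (hS0 : 0 ≤ S)
    (hS : ∀ u ∈ Isq, |(κ₁ (aLL u)).toReal - (κ₂ (aLL u)).toReal| ≤ S)
    (μ : SignedMeasure (ℝ × ℝ)) :
    |∫ v, Bfun μ v ∂κ₁ - ∫ v, Bfun μ v ∂κ₂| ≤ S * (μ.totalVariation Isq).toReal := by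
  set p := μ.toJordanDecomposition.posPart with hp
  set q := μ.toJordanDecomposition.negPart with hq
  set U : Set (ℝ × ℝ) := Ioc (0:ℝ) 1 ×ˢ Ioc (0:ℝ) 1 with hU
  have hUmeas : MeasurableSet U := measurableSet_Ioc.prod measurableSet_Ioc
  set h : ℝ × ℝ → ℝ := fun w =>
    ((κ₁ ((fun v => (v, w)) ⁻¹' Sl0)).toReal - (κ₂ ((fun v => (v, w)) ⁻¹' Sl0)).toReal) -
    ((κ₁ ((fun v => (v, w)) ⁻¹' Sl1)).toReal - (κ₂ ((fun v => (v, w)) ⁻¹' Sl1)).toReal) -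
    ((κ₁ ((fun v => (v, w)) ⁻¹' Sl2)).toReal - (κ₂ ((fun v => (v, w)) ⁻¹' Sl2)).toReal)
    with hh
  -- Step 1 : ∫ B dκ via the six w-side integrals
  have hIB : ∀ (κ : Measure (ℝ × ℝ)), ∀ (_ : IsProbabilityMeasure κ),
      ∫ v, Bfun μ v ∂κ =
        (∫ w, (κ ((fun v => (v, w)) ⁻¹' Sl0)).toReal ∂p -
          ∫ w, (κ ((fun v => (v, w)) ⁻¹' Sl0)).toReal ∂q) -
        (∫ w, (κ ((fun v => (v, w)) ⁻¹' Sl1)).toReal ∂p -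
          ∫ w, (κ ((fun v => (v, w)) ⁻¹' Sl1)).toReal ∂q) -
        (∫ w, (κ ((fun v => (v, w)) ⁻¹' Sl2)).toReal ∂p -
          ∫ w, (κ ((fun v => (v, w)) ⁻¹' Sl2)).toReal ∂q) := by
    intro κ hκP
    have e : ∫ v, Bfun μ v ∂κ = ∫ v,
        (((p (Prod.mk v ⁻¹' Sl0)).toReal - (q (Prod.mk v ⁻¹' Sl0)).toReal) -
        ((p (Prod.mk v ⁻¹' Sl1)).toReal - (q (Prod.mk v ⁻¹' Sl1)).toReal) -
        ((p (Prod.mk v ⁻¹' Sl2)).toReal - (q (Prod.mk v ⁻¹' Sl2)).toReal)) ∂κ := by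
      refine integral_congr_ae (ae_of_all _ fun v => ?_)
      exact Bfun_eq μ v
    rw [e]
    have i0p := slice_integrable κ p Sl0_meas
    have i0q := slice_integrable κ q Sl0_meas
    have i1p := slice_integrable κ p Sl1_meas
    have i1q := slice_integrable κ q Sl1_meas
    have i2p := slice_integrable κ p Sl2_meas
    have i2q := slice_integrable κ q Sl2_meas
    have i01 : Integrable (fun v => (p (Prod.mk v ⁻¹' Sl0)).toReal -
        (q (Prod.mk v ⁻¹' Sl0)).toReal) κ := i0p.sub i0q
    have i11 : Integrable (fun v => (p (Prod.mk v ⁻¹' Sl1)).toReal -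
        (q (Prod.mk v ⁻¹' Sl1)).toReal) κ := i1p.sub i1q
    have i21 : Integrable (fun v => (p (Prod.mk v ⁻¹' Sl2)).toReal -
        (q (Prod.mk v ⁻¹' Sl2)).toReal) κ := i2p.sub i2q
    have i011 : Integrable (fun v => (p (Prod.mk v ⁻¹' Sl0)).toReal -
        (q (Prod.mk v ⁻¹' Sl0)).toReal - ((p (Prod.mk v ⁻¹' Sl1)).toReal -
        (q (Prod.mk v ⁻¹' Sl1)).toReal)) κ := i01.sub i11
    rw [integral_sub i011 i21, integral_sub i01 i11,
      integral_sub i0p i0q, integral_sub i1p i1q, integral_sub i2p i2q,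
      flip_int κ p Sl0_meas, flip_int κ q Sl0_meas, flip_int κ p Sl1_meas,
      flip_int κ q Sl1_meas, flip_int κ p Sl2_meas, flip_int κ q Sl2_meas]
  -- Step 2 : the difference equals ∫ h dp - ∫ h dq
  have g0p₁ := slice_integrable' κ₁ p Sl0_meas
  have g0p₂ := slice_integrable' κ₂ p Sl0_meas
  have g1p₁ := slice_integrable' κ₁ p Sl1_meas
  have g1p₂ := slice_integrable' κ₂ p Sl1_meas
  have g2p₁ := slice_integrable' κ₁ p Sl2_meas
  have g2p₂ := slice_integrable' κ₂ p Sl2_meas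
  have g0q₁ := slice_integrable' κ₁ q Sl0_meas
  have g0q₂ := slice_integrable' κ₂ q Sl0_meas
  have g1q₁ := slice_integrable' κ₁ q Sl1_meas
  have g1q₂ := slice_integrable' κ₂ q Sl1_meas
  have g2q₁ := slice_integrable' κ₁ q Sl2_meas
  have g2q₂ := slice_integrable' κ₂ q Sl2_meas
  have hhintp : Integrable h p :=
    ((g0p₁.sub g0p₂).sub (g1p₁.sub g1p₂)).sub (g2p₁.sub g2p₂)
  have hhintq : Integrable h q :=
    ((g0q₁.sub g0q₂).sub (g1q₁.sub g1q₂)).sub (g2q₁.sub g2q₂)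
  have hkey : ∫ v, Bfun μ v ∂κ₁ - ∫ v, Bfun μ v ∂κ₂ = ∫ w, h w ∂p - ∫ w, h w ∂q := by
    rw [hIB κ₁ inferInstance, hIB κ₂ inferInstance, hh]
    have c0p : Integrable (fun w => (κ₁ ((fun v => (v, w)) ⁻¹' Sl0)).toReal -
        (κ₂ ((fun v => (v, w)) ⁻¹' Sl0)).toReal) p := g0p₁.sub g0p₂
    have c1p : Integrable (fun w => (κ₁ ((fun v => (v, w)) ⁻¹' Sl1)).toReal -
        (κ₂ ((fun v => (v, w)) ⁻¹' Sl1)).toReal) p := g1p₁.sub g1p₂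
    have c2p : Integrable (fun w => (κ₁ ((fun v => (v, w)) ⁻¹' Sl2)).toReal -
        (κ₂ ((fun v => (v, w)) ⁻¹' Sl2)).toReal) p := g2p₁.sub g2p₂
    have c01p : Integrable (fun w => (κ₁ ((fun v => (v, w)) ⁻¹' Sl0)).toReal -
        (κ₂ ((fun v => (v, w)) ⁻¹' Sl0)).toReal - ((κ₁ ((fun v => (v, w)) ⁻¹' Sl1)).toReal -
        (κ₂ ((fun v => (v, w)) ⁻¹' Sl1)).toReal)) p := c0p.sub c1p
    have c0q : Integrable (fun w => (κ₁ ((fun v => (v, w)) ⁻¹' Sl0)).toReal -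
        (κ₂ ((fun v => (v, w)) ⁻¹' Sl0)).toReal) q := g0q₁.sub g0q₂
    have c1q : Integrable (fun w => (κ₁ ((fun v => (v, w)) ⁻¹' Sl1)).toReal -
        (κ₂ ((fun v => (v, w)) ⁻¹' Sl1)).toReal) q := g1q₁.sub g1q₂
    have c2q : Integrable (fun w => (κ₁ ((fun v => (v, w)) ⁻¹' Sl2)).toReal -
        (κ₂ ((fun v => (v, w)) ⁻¹' Sl2)).toReal) q := g2q₁.sub g2q₂
    have c01q : Integrable (fun w => (κ₁ ((fun v => (v, w)) ⁻¹' Sl0)).toReal -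
        (κ₂ ((fun v => (v, w)) ⁻¹' Sl0)).toReal - ((κ₁ ((fun v => (v, w)) ⁻¹' Sl1)).toReal -
        (κ₂ ((fun v => (v, w)) ⁻¹' Sl1)).toReal)) q := c0q.sub c1q
    rw [integral_sub c01p c2p, integral_sub c0p c1p,
      integral_sub g0p₁ g0p₂, integral_sub g1p₁ g1p₂, integral_sub g2p₁ g2p₂,
      integral_sub c01q c2q, integral_sub c0q c1q,
      integral_sub g0q₁ g0q₂, integral_sub g1q₁ g1q₂, integral_sub g2q₁ g2q₂]
    ring
  -- Step 3 : pointwise bound on h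
  have hb : ∀ w, |h w| ≤ Set.indicator U (fun _ => S) w := by
    intro w
    by_cases hw1 : 0 < w.1
    · by_cases hw2 : 0 < w.2
      · by_cases hw1' : w.1 ≤ 1
        · by_cases hw2' : w.2 ≤ 1
          · -- main case : w ∈ U
            have hwU : w ∈ U := ⟨⟨hw1, hw1'⟩, ⟨hw2, hw2'⟩⟩
            rw [indicator_of_mem hwU]
            have e0 : (fun v : ℝ × ℝ => (v, w)) ⁻¹' Sl0 =
                {v : ℝ × ℝ | w.1 ≤ v.1 ∧ w.2 ≤ v.2} := by
              ext v; simp only [Sl0, mem_preimage, mem_setOf_eq]; tauto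
            have e1 : (fun v : ℝ × ℝ => (v, w)) ⁻¹' Sl1 = {v : ℝ × ℝ | w.1 ≤ v.1} := by
              ext v; simp only [Sl1, mem_preimage, mem_setOf_eq]
              constructor
              · rintro ⟨_, hv, _, _⟩; exact hv
              · intro hv; exact ⟨hw1, hv, hw2, hw2'⟩
            have e2 : (fun v : ℝ × ℝ => (v, w)) ⁻¹' Sl2 = {v : ℝ × ℝ | w.2 ≤ v.2} := by
              ext v; simp only [Sl2, mem_preimage, mem_setOf_eq]
              constructor
              · rintro ⟨_, _, _, hv⟩; exact hv
              · intro hv; exact ⟨hw1, hw1', hw2, hv⟩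
            have hid : ∀ (κ : Measure (ℝ × ℝ)), ∀ (_ : IsProbabilityMeasure κ),
                (κ {v : ℝ × ℝ | w.1 ≤ v.1 ∧ w.2 ≤ v.2}).toReal -
                (κ {v : ℝ × ℝ | w.1 ≤ v.1}).toReal - (κ {v : ℝ × ℝ | w.2 ≤ v.2}).toReal =
                (κ {v : ℝ × ℝ | v.1 < w.1 ∧ v.2 < w.2}).toReal - 1 := by
              intro κ hκP
              have hH2m : MeasurableSet {v : ℝ × ℝ | w.2 ≤ v.2} :=
                measurableSet_le measurable_const measurable_snd
              have hLLm : MeasurableSet {v : ℝ × ℝ | v.1 < w.1 ∧ v.2 < w.2} :=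
                (measurableSet_lt measurable_fst measurable_const).inter
                  (measurableSet_lt measurable_snd measurable_const)
              have hinter : {v : ℝ × ℝ | w.1 ≤ v.1} ∩ {v : ℝ × ℝ | w.2 ≤ v.2} =
                  {v : ℝ × ℝ | w.1 ≤ v.1 ∧ w.2 ≤ v.2} := rfl
              have hunion : {v : ℝ × ℝ | w.1 ≤ v.1} ∪ {v : ℝ × ℝ | w.2 ≤ v.2} =
                  {v : ℝ × ℝ | v.1 < w.1 ∧ v.2 < w.2}ᶜ := by
                ext v
                simp only [mem_union, mem_setOf_eq, mem_compl_iff, not_and, not_lt]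
                constructor
                · rintro (hv | hv)
                  · intro hc; exact absurd hv (not_le.mpr hc)
                  · intro _; exact hv
                · intro hv
                  by_cases hc : v.1 < w.1
                  · exact Or.inr (hv hc)
                  · exact Or.inl (not_lt.mp hc)
              have hsum := measure_union_add_inter {v : ℝ × ℝ | w.1 ≤ v.1} hH2m (μ := κ)
              rw [hinter, hunion, prob_compl_eq_one_sub hLLm] at hsum
              have hLLle : κ {v : ℝ × ℝ | v.1 < w.1 ∧ v.2 < w.2} ≤ 1 := prob_le_one
              have hreal := congrArg ENNReal.toReal hsum
              rw [ENNReal.toReal_add (ne_top_of_le_ne_top ENNReal.one_ne_top tsub_le_self)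
                  (measure_ne_top κ _),
                ENNReal.toReal_add (measure_ne_top κ _) (measure_ne_top κ _),
                ENNReal.toReal_sub_of_le hLLle ENNReal.one_ne_top, ENNReal.toReal_one] at hreal
              linarith
            have hstrict := strict2 κ₁ κ₂ h₁ h₂ hS hw1 hw1' hw2 hw2'
            have hid₁ := hid κ₁ inferInstance
            have hid₂ := hid κ₂ inferInstance
            rw [hh]
            simp only [e0, e1, e2]
            calc |((κ₁ {v : ℝ × ℝ | w.1 ≤ v.1 ∧ w.2 ≤ v.2}).toReal -
                  (κ₂ {v : ℝ × ℝ | w.1 ≤ v.1 ∧ w.2 ≤ v.2}).toReal) -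
                ((κ₁ {v : ℝ × ℝ | w.1 ≤ v.1}).toReal - (κ₂ {v : ℝ × ℝ | w.1 ≤ v.1}).toReal) -
                ((κ₁ {v : ℝ × ℝ | w.2 ≤ v.2}).toReal - (κ₂ {v : ℝ × ℝ | w.2 ≤ v.2}).toReal)|
                = |(κ₁ {v : ℝ × ℝ | v.1 < w.1 ∧ v.2 < w.2}).toReal -
                    (κ₂ {v : ℝ × ℝ | v.1 < w.1 ∧ v.2 < w.2}).toReal| := by
                  congr 1; linarith
              _ ≤ S := hstrict
          · -- w.2 > 1
            have hz : ∀ (κ : Measure (ℝ × ℝ)), κ Isqᶜ = 0 →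
                κ ((fun v : ℝ × ℝ => (v, w)) ⁻¹' Sl0) = 0 ∧
                κ ((fun v : ℝ × ℝ => (v, w)) ⁻¹' Sl2) = 0 := by
              intro κ hκ
              constructor
              · refine measure_mono_null (fun v hv => ?_) hκ
                exact fun hvI => hw2' (le_trans hv.2.2.2 hvI.2.2)
              · refine measure_mono_null (fun v hv => ?_) hκ
                exact fun hvI => hw2' (le_trans hv.2.2.2 hvI.2.2)
            have e1 : (fun v : ℝ × ℝ => (v, w)) ⁻¹' Sl1 = ∅ := by
              ext v; simp only [Sl1, mem_preimage, mem_setOf_eq, mem_empty_iff_false, iff_false]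
              rintro ⟨_, _, _, hc⟩; exact hw2' hc
            have hwU : w ∉ U := fun hU => hw2' hU.2.2
            rw [indicator_of_notMem hwU, hh]
            simp only [e1, (hz κ₁ h₁).1, (hz κ₂ h₂).1, (hz κ₁ h₁).2, (hz κ₂ h₂).2,
              measure_empty, ENNReal.toReal_zero]
            simp
        · -- w.1 > 1
          have hz : ∀ (κ : Measure (ℝ × ℝ)), κ Isqᶜ = 0 →
              κ ((fun v : ℝ × ℝ => (v, w)) ⁻¹' Sl0) = 0 ∧
              κ ((fun v : ℝ × ℝ => (v, w)) ⁻¹' Sl1) = 0 := by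
            intro κ hκ
            constructor
            · refine measure_mono_null (fun v hv => ?_) hκ
              exact fun hvI => hw1' (le_trans hv.2.1 hvI.1.2)
            · refine measure_mono_null (fun v hv => ?_) hκ
              exact fun hvI => hw1' (le_trans hv.2.1 hvI.1.2)
          have e2 : (fun v : ℝ × ℝ => (v, w)) ⁻¹' Sl2 = ∅ := by
            ext v; simp only [Sl2, mem_preimage, mem_setOf_eq, mem_empty_iff_false, iff_false]
            rintro ⟨_, hc, _, _⟩; exact hw1' hc
          have hwU : w ∉ U := fun hU => hw1' hU.1.2
          rw [indicator_of_notMem hwU, hh]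
          simp only [e2, (hz κ₁ h₁).1, (hz κ₂ h₂).1, (hz κ₁ h₁).2, (hz κ₂ h₂).2,
            measure_empty, ENNReal.toReal_zero]
          simp
      · -- w.2 ≤ 0
        have e : ∀ Ss ∈ ({Sl0, Sl1, Sl2} : Set (Set ((ℝ × ℝ) × (ℝ × ℝ)))), True := fun _ _ => trivial
        have e0 : (fun v : ℝ × ℝ => (v, w)) ⁻¹' Sl0 = ∅ := by
          ext v; simp only [Sl0, mem_preimage, mem_setOf_eq, mem_empty_iff_false, iff_false]
          rintro ⟨_, _, hc, _⟩; exact hw2 hc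
        have e1 : (fun v : ℝ × ℝ => (v, w)) ⁻¹' Sl1 = ∅ := by
          ext v; simp only [Sl1, mem_preimage, mem_setOf_eq, mem_empty_iff_false, iff_false]
          rintro ⟨_, _, hc, _⟩; exact hw2 hc
        have e2 : (fun v : ℝ × ℝ => (v, w)) ⁻¹' Sl2 = ∅ := by
          ext v; simp only [Sl2, mem_preimage, mem_setOf_eq, mem_empty_iff_false, iff_false]
          rintro ⟨_, _, hc, _⟩; exact hw2 hc
        rw [hh]
        simp only [e0, e1, e2, measure_empty, ENNReal.toReal_zero]
        have : |((0:ℝ) - 0) - (0 - 0) - (0 - 0)| = 0 := by norm_num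
        rw [this]
        exact Set.indicator_nonneg (fun _ _ => hS0) w
    · -- w.1 ≤ 0
      have e0 : (fun v : ℝ × ℝ => (v, w)) ⁻¹' Sl0 = ∅ := by
        ext v; simp only [Sl0, mem_preimage, mem_setOf_eq, mem_empty_iff_false, iff_false]
        rintro ⟨hc, _, _, _⟩; exact hw1 hc
      have e1 : (fun v : ℝ × ℝ => (v, w)) ⁻¹' Sl1 = ∅ := by
        ext v; simp only [Sl1, mem_preimage, mem_setOf_eq, mem_empty_iff_false, iff_false]
        rintro ⟨hc, _, _, _⟩; exact hw1 hc
      have e2 : (fun v : ℝ × ℝ => (v, w)) ⁻¹' Sl2 = ∅ := by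
        ext v; simp only [Sl2, mem_preimage, mem_setOf_eq, mem_empty_iff_false, iff_false]
        rintro ⟨hc, _, _, _⟩; exact hw1 hc
      rw [hh]
      simp only [e0, e1, e2, measure_empty, ENNReal.toReal_zero]
      have : |((0:ℝ) - 0) - (0 - 0) - (0 - 0)| = 0 := by norm_num
      rw [this]
      exact Set.indicator_nonneg (fun _ _ => hS0) w
  -- Step 4 : assemble
  rw [hkey]
  have hind_int : ∀ (ρ : Measure (ℝ × ℝ)), ∀ (_ : IsFiniteMeasure ρ),
      Integrable (Set.indicator U (fun _ => S)) ρ := by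
    intro ρ hρ
    rw [integrable_indicator_iff hUmeas]
    exact integrableOn_const (measure_ne_top ρ U)
  have hb1 : |∫ w, h w ∂p| ≤ S * (p U).toReal := by
    calc |∫ w, h w ∂p| ≤ ∫ w, |h w| ∂p := by
          simpa [Real.norm_eq_abs] using norm_integral_le_integral_norm (μ := p) h
      _ ≤ ∫ w, Set.indicator U (fun _ => S) w ∂p :=
          integral_mono hhintp.abs (hind_int p inferInstance) hb
      _ = (p U).toReal • S := integral_indicator_const S hUmeas
      _ = S * (p U).toReal := by rw [smul_eq_mul]; ring
  have hb2 : |∫ w, h w ∂q| ≤ S * (q U).toReal := by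
    calc |∫ w, h w ∂q| ≤ ∫ w, |h w| ∂q := by
          simpa [Real.norm_eq_abs] using norm_integral_le_integral_norm (μ := q) h
      _ ≤ ∫ w, Set.indicator U (fun _ => S) w ∂q :=
          integral_mono hhintq.abs (hind_int q inferInstance) hb
      _ = (q U).toReal • S := integral_indicator_const S hUmeas
      _ = S * (q U).toReal := by rw [smul_eq_mul]; ring
  have hμtv : (p U).toReal + (q U).toReal ≤ (μ.totalVariation Isq).toReal := by
    have hUIsq : U ⊆ Isq := prod_mono Ioc_subset_Icc_self Ioc_subset_Icc_self
    calc (p U).toReal + (q U).toReal = ((p U) + (q U)).toReal :=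
          (ENNReal.toReal_add (measure_ne_top _ _) (measure_ne_top _ _)).symm
      _ ≤ ((p Isq) + (q Isq)).toReal := by
          refine ENNReal.toReal_mono ?_
            (add_le_add (measure_mono hUIsq) (measure_mono hUIsq))
          exact ENNReal.add_ne_top.mpr ⟨measure_ne_top _ _, measure_ne_top _ _⟩
      _ = (μ.totalVariation Isq).toReal := rfl
  calc |∫ w, h w ∂p - ∫ w, h w ∂q| ≤ |∫ w, h w ∂p| + |∫ w, h w ∂q| := abs_sub _ _
    _ ≤ S * (p U).toReal + S * (q U).toReal := add_le_add hb1 hb2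
    _ = S * ((p U).toReal + (q U).toReal) := by ring
    _ ≤ S * (μ.totalVariation Isq).toReal := mul_le_mul_of_nonneg_left hμtv hS0

/-! ### The main bound -/

lemma monoOn_clamp_bound {f : ℝ → ℝ} (hf : MonotoneOn f (Icc (0:ℝ) 1)) (t : ℝ) :
    |f (clamp t)| ≤ max |f 0| |f 1| := by
  have h0 : (0:ℝ) ∈ Icc (0:ℝ) 1 := ⟨le_rfl, zero_le_one⟩
  have h1 : (1:ℝ) ∈ Icc (0:ℝ) 1 := ⟨zero_le_one, le_rfl⟩
  have a1 : f 0 ≤ f (clamp t) := hf h0 (clamp_mem t) (clamp_mem t).1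
  have a2 : f (clamp t) ≤ f 1 := hf (clamp_mem t) h1 (clamp_mem t).2
  have b1 : |f 0| ≤ max |f 0| |f 1| := le_max_left _ _
  have b2 : |f 1| ≤ max |f 0| |f 1| := le_max_right _ _
  have c1 : -|f 0| ≤ f 0 := neg_abs_le _
  have c2 : f 1 ≤ |f 1| := le_abs_self _
  rw [abs_le]
  exact ⟨by linarith, by linarith⟩

lemma main_bound (κ₁ κ₂ : Measure (ℝ × ℝ)) [IsProbabilityMeasure κ₁] [IsProbabilityMeasure κ₂]
    (h₁ : κ₁ Isqᶜ = 0) (h₂ : κ₂ Isqᶜ = 0) {S : ℝ}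
    (hS : ∀ u ∈ Isq, |(κ₁ (aLL u)).toReal - (κ₂ (aLL u)).toReal| ≤ S)
    (j : ℝ × ℝ → ℝ) (μ : SignedMeasure (ℝ × ℝ))
    (hjμ : ∀ u ∈ Isq, j u = j (u.1, 0) + j (0, u.2) - j (0, 0) +
      μ (Ioc (0:ℝ) u.1 ×ˢ Ioc (0:ℝ) u.2))
    (hBV1 : BoundedVariationOn (fun t => j (t, 1)) (Icc (0:ℝ) 1))
    (hBV2 : BoundedVariationOn (fun t => j (1, t)) (Icc (0:ℝ) 1)) :
    |∫ v, j v ∂κ₁ - ∫ v, j v ∂κ₂| ≤ 5 * S *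
      ((μ.totalVariation Isq).toReal +
        (eVariationOn (fun t => j (t, 1)) (Icc (0:ℝ) 1)).toReal +
        (eVariationOn (fun t => j (1, t)) (Icc (0:ℝ) 1)).toReal) := by
  have h00 : ((0:ℝ), (0:ℝ)) ∈ Isq := ⟨⟨le_rfl, zero_le_one⟩, ⟨le_rfl, zero_le_one⟩⟩
  have hS0 : 0 ≤ S := le_trans (abs_nonneg _) (hS (0, 0) h00)
  have h0mem : (0:ℝ) ∈ Icc (0:ℝ) 1 := ⟨le_rfl, zero_le_one⟩
  have h1mem : (1:ℝ) ∈ Icc (0:ℝ) 1 := ⟨zero_le_one, le_rfl⟩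
  have hcl0 : clamp 0 = 0 := clamp_eq h0mem
  have hcl1 : clamp 1 = 1 := clamp_eq h1mem
  -- edge decompositions
  set p₁ : ℝ → ℝ := variationOnFromTo (fun t => j (t, 1)) (Icc (0:ℝ) 1) 0 with hp₁def
  set p₂ : ℝ → ℝ := variationOnFromTo (fun t => j (1, t)) (Icc (0:ℝ) 1) 0 with hp₂def
  have hloc1 := hBV1.locallyBoundedVariationOn
  have hloc2 := hBV2.locallyBoundedVariationOn
  have hp₁mono : MonotoneOn p₁ (Icc (0:ℝ) 1) := variationOnFromTo.monotoneOn hloc1 h0mem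
  have hp₂mono : MonotoneOn p₂ (Icc (0:ℝ) 1) := variationOnFromTo.monotoneOn hloc2 h0mem
  have hq₁mono : MonotoneOn (fun t => p₁ t - j (t, 1)) (Icc (0:ℝ) 1) := by
    have := variationOnFromTo.sub_self_monotoneOn hloc1 h0mem
    intro a ha b hb hab
    simpa using this ha hb hab
  have hq₂mono : MonotoneOn (fun t => p₂ t - j (1, t)) (Icc (0:ℝ) 1) := by
    have := variationOnFromTo.sub_self_monotoneOn hloc2 h0mem
    intro a ha b hb hab
    simpa using this ha hb hab
  set V₁ : ℝ := (eVariationOn (fun t => j (t, 1)) (Icc (0:ℝ) 1)).toReal with hV₁def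
  set V₂ : ℝ := (eVariationOn (fun t => j (1, t)) (Icc (0:ℝ) 1)).toReal with hV₂def
  have hV₁0 : 0 ≤ V₁ := ENNReal.toReal_nonneg
  have hV₂0 : 0 ≤ V₂ := ENNReal.toReal_nonneg
  have hTV0 : 0 ≤ (μ.totalVariation Isq).toReal := ENNReal.toReal_nonneg
  have hp₁0 : p₁ 0 = 0 := variationOnFromTo.self _ _ 0
  have hp₂0 : p₂ 0 = 0 := variationOnFromTo.self _ _ 0
  have hp₁1 : p₁ 1 = V₁ := by
    rw [hp₁def, variationOnFromTo.eq_of_le _ _ zero_le_one, hV₁def]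
    congr 1
    rw [Set.inter_self]
  have hp₂1 : p₂ 1 = V₂ := by
    rw [hp₂def, variationOnFromTo.eq_of_le _ _ zero_le_one, hV₂def]
    congr 1
    rw [Set.inter_self]
  have hφ₁d : |j (1, 1) - j (0, 1)| ≤ V₁ := by
    have h := eVariationOn.edist_le (fun t => j (t, 1)) h1mem h0mem
    have h' := ENNReal.toReal_mono hBV1 h
    rw [edist_dist, ENNReal.toReal_ofReal dist_nonneg, Real.dist_eq] at h'
    exact h'
  have hφ₂d : |j (1, 1) - j (1, 0)| ≤ V₂ := by
    have h := eVariationOn.edist_le (fun t => j (1, t)) h1mem h0mem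
    have h' := ENNReal.toReal_mono hBV2 h
    rw [edist_dist, ENNReal.toReal_ofReal dist_nonneg, Real.dist_eq] at h'
    exact h'
  -- monotone envelopes (globally defined via clamp)
  have hgP₁mono : Monotone (fun t => p₁ (clamp t)) :=
    fun a b hab => hp₁mono (clamp_mem a) (clamp_mem b) (clamp_mono hab)
  have hgP₂mono : Monotone (fun t => p₂ (clamp t)) :=
    fun a b hab => hp₂mono (clamp_mem a) (clamp_mem b) (clamp_mono hab)
  have hgQ₁mono : Monotone (fun t => p₁ (clamp t) - j (clamp t, 1)) :=
    fun a b hab => hq₁mono (clamp_mem a) (clamp_mem b) (clamp_mono hab)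
  have hgQ₂mono : Monotone (fun t => p₂ (clamp t) - j (1, clamp t)) :=
    fun a b hab => hq₂mono (clamp_mem a) (clamp_mem b) (clamp_mono hab)
  -- marginals
  have hmargf : ∀ (κ : Measure (ℝ × ℝ)), κ Isqᶜ = 0 →
      (κ.map Prod.fst) (Icc (0:ℝ) 1)ᶜ = 0 := by
    intro κ hκ
    rw [Measure.map_apply measurable_fst measurableSet_Icc.compl]
    refine measure_mono_null (fun v hv => ?_) hκ
    exact fun hvI => hv hvI.1
  have hmargs : ∀ (κ : Measure (ℝ × ℝ)), κ Isqᶜ = 0 →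
      (κ.map Prod.snd) (Icc (0:ℝ) 1)ᶜ = 0 := by
    intro κ hκ
    rw [Measure.map_apply measurable_snd measurableSet_Icc.compl]
    refine measure_mono_null (fun v hv => ?_) hκ
    exact fun hvI => hv hvI.2
  have hcorf : ∀ a ∈ Icc (0:ℝ) 1,
      |((κ₁.map Prod.fst) (Iic a)).toReal - ((κ₂.map Prod.fst) (Iic a)).toReal| ≤ S := by
    intro a ha
    have e : ∀ (κ : Measure (ℝ × ℝ)), κ Isqᶜ = 0 →
        (κ.map Prod.fst) (Iic a) = κ (aLL (a, 1)) := by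
      intro κ hκ
      rw [Measure.map_apply measurable_fst measurableSet_Iic]
      refine meas_congr_null κ hκ ?_ ?_
      · intro v hv
        by_cases hvI : v ∈ Isq
        · exact Or.inl ⟨hv, hvI.2.2⟩
        · exact Or.inr hvI
      · intro v hv
        exact Or.inl hv.1
    rw [e κ₁ h₁, e κ₂ h₂]
    exact hS (a, 1) ⟨ha, h1mem⟩
  have hcors : ∀ a ∈ Icc (0:ℝ) 1,
      |((κ₁.map Prod.snd) (Iic a)).toReal - ((κ₂.map Prod.snd) (Iic a)).toReal| ≤ S := by
    intro a ha
    have e : ∀ (κ : Measure (ℝ × ℝ)), κ Isqᶜ = 0 →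
        (κ.map Prod.snd) (Iic a) = κ (aLL (1, a)) := by
      intro κ hκ
      rw [Measure.map_apply measurable_snd measurableSet_Iic]
      refine meas_congr_null κ hκ ?_ ?_
      · intro v hv
        by_cases hvI : v ∈ Isq
        · exact Or.inl ⟨hvI.1.2, hv⟩
        · exact Or.inr hvI
      · intro v hv
        exact Or.inl hv.2
    rw [e κ₁ h₁, e κ₂ h₂]
    exact hS (1, a) ⟨h1mem, ha⟩
  haveI i1 : IsProbabilityMeasure (κ₁.map Prod.fst) :=
    Measure.isProbabilityMeasure_map measurable_fst.aemeasurable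
  haveI i2 : IsProbabilityMeasure (κ₂.map Prod.fst) :=
    Measure.isProbabilityMeasure_map measurable_fst.aemeasurable
  haveI i3 : IsProbabilityMeasure (κ₁.map Prod.snd) :=
    Measure.isProbabilityMeasure_map measurable_snd.aemeasurable
  haveI i4 : IsProbabilityMeasure (κ₂.map Prod.snd) :=
    Measure.isProbabilityMeasure_map measurable_snd.aemeasurable
  have oneD_fst : ∀ g : ℝ → ℝ, Monotone g →
      |∫ v, g v.1 ∂κ₁ - ∫ v, g v.1 ∂κ₂| ≤ S * (g 1 - g 0) := by
    intro g hg
    have e : ∀ κ : Measure (ℝ × ℝ), ∫ v, g v.1 ∂κ = ∫ t, g t ∂(κ.map Prod.fst) := fun κ =>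
      (integral_map measurable_fst.aemeasurable hg.measurable.aestronglyMeasurable).symm
    rw [e κ₁, e κ₂]
    exact oneD _ _ (hmargf κ₁ h₁) (hmargf κ₂ h₂) hS0 hcorf g hg
  have oneD_snd : ∀ g : ℝ → ℝ, Monotone g →
      |∫ v, g v.2 ∂κ₁ - ∫ v, g v.2 ∂κ₂| ≤ S * (g 1 - g 0) := by
    intro g hg
    have e : ∀ κ : Measure (ℝ × ℝ), ∫ v, g v.2 ∂κ = ∫ t, g t ∂(κ.map Prod.snd) := fun κ =>
      (integral_map measurable_snd.aemeasurable hg.measurable.aestronglyMeasurable).symm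
    rw [e κ₁, e κ₂]
    exact oneD _ _ (hmargs κ₁ h₁) (hmargs κ₂ h₂) hS0 hcors g hg
  -- pointwise decomposition of j on Isq
  have hjdec : ∀ v ∈ Isq, j v = p₁ (clamp v.1) - (p₁ (clamp v.1) - j (clamp v.1, 1)) +
      (p₂ (clamp v.2) - (p₂ (clamp v.2) - j (1, clamp v.2))) +
      (j (0, 0) - j (0, 1) - j (1, 0)) + Bfun μ v := by
    intro v hv
    rw [clamp_eq hv.1, clamp_eq hv.2]
    have hμv := hjμ v hv
    have hμa := hjμ (v.1, 1) ⟨hv.1, h1mem⟩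
    have hμb := hjμ (1, v.2) ⟨h1mem, hv.2⟩
    dsimp only at hμa hμb
    rw [Bfun]
    linarith
  -- integrability of the pieces
  have ip1 : ∀ (κ : Measure (ℝ × ℝ)), ∀ (_ : IsFiniteMeasure κ),
      Integrable (fun v : ℝ × ℝ => p₁ (clamp v.1)) κ := fun κ _ =>
    bdd_meas_integrable κ _ (hgP₁mono.measurable.comp measurable_fst) _
      (fun v => monoOn_clamp_bound hp₁mono v.1)
  have ip2 : ∀ (κ : Measure (ℝ × ℝ)), ∀ (_ : IsFiniteMeasure κ),
      Integrable (fun v : ℝ × ℝ => p₂ (clamp v.2)) κ := fun κ _ =>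
    bdd_meas_integrable κ _ (hgP₂mono.measurable.comp measurable_snd) _
      (fun v => monoOn_clamp_bound hp₂mono v.2)
  have iq1 : ∀ (κ : Measure (ℝ × ℝ)), ∀ (_ : IsFiniteMeasure κ),
      Integrable (fun v : ℝ × ℝ => p₁ (clamp v.1) - j (clamp v.1, 1)) κ := fun κ _ =>
    bdd_meas_integrable κ _ (hgQ₁mono.measurable.comp measurable_fst) _
      (fun v => monoOn_clamp_bound hq₁mono v.1)
  have iq2 : ∀ (κ : Measure (ℝ × ℝ)), ∀ (_ : IsFiniteMeasure κ),
      Integrable (fun v : ℝ × ℝ => p₂ (clamp v.2) - j (1, clamp v.2)) κ := fun κ _ =>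
    bdd_meas_integrable κ _ (hgQ₂mono.measurable.comp measurable_snd) _
      (fun v => monoOn_clamp_bound hq₂mono v.2)
  -- splitting the integral
  have hsplit : ∀ (κ : Measure (ℝ × ℝ)), ∀ (_ : IsProbabilityMeasure κ), κ Isqᶜ = 0 →
      ∫ v, j v ∂κ =
        (∫ v, p₁ (clamp v.1) ∂κ - ∫ v, (p₁ (clamp v.1) - j (clamp v.1, 1)) ∂κ) +
        (∫ v, p₂ (clamp v.2) ∂κ - ∫ v, (p₂ (clamp v.2) - j (1, clamp v.2)) ∂κ) +
        (j (0, 0) - j (0, 1) - j (1, 0)) + ∫ v, Bfun μ v ∂κ := by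
    intro κ hκP hκ
    have hae : ∀ᵐ v ∂κ, v ∈ Isq := by rw [ae_iff]; exact hκ
    have e : ∫ v, j v ∂κ = ∫ v, (p₁ (clamp v.1) - (p₁ (clamp v.1) - j (clamp v.1, 1)) +
        (p₂ (clamp v.2) - (p₂ (clamp v.2) - j (1, clamp v.2))) +
        (j (0, 0) - j (0, 1) - j (1, 0)) + Bfun μ v) ∂κ :=
      integral_congr_ae (by filter_upwards [hae] with v hv; exact hjdec v hv)
    rw [e]
    have iA : Integrable (fun v : ℝ × ℝ => p₁ (clamp v.1) -
        (p₁ (clamp v.1) - j (clamp v.1, 1))) κ := (ip1 κ inferInstance).sub (iq1 κ inferInstance)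
    have iB : Integrable (fun v : ℝ × ℝ => p₂ (clamp v.2) -
        (p₂ (clamp v.2) - j (1, clamp v.2))) κ := (ip2 κ inferInstance).sub (iq2 κ inferInstance)
    have iAB : Integrable (fun v : ℝ × ℝ => p₁ (clamp v.1) -
        (p₁ (clamp v.1) - j (clamp v.1, 1)) +
        (p₂ (clamp v.2) - (p₂ (clamp v.2) - j (1, clamp v.2)))) κ := iA.add iB
    have iABc : Integrable (fun v : ℝ × ℝ => p₁ (clamp v.1) -
        (p₁ (clamp v.1) - j (clamp v.1, 1)) +
        (p₂ (clamp v.2) - (p₂ (clamp v.2) - j (1, clamp v.2))) +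
        (j (0, 0) - j (0, 1) - j (1, 0))) κ := iAB.add (integrable_const _)
    rw [integral_add iABc (Bfun_integrable κ μ), integral_add iAB (integrable_const _),
      integral_add iA iB, integral_sub (ip1 κ inferInstance) (iq1 κ inferInstance),
      integral_sub (ip2 κ inferInstance) (iq2 κ inferInstance), integral_const]
    simp [measure_univ]
  -- the four one-dimensional bounds
  have bP₁ : |∫ v, p₁ (clamp v.1) ∂κ₁ - ∫ v, p₁ (clamp v.1) ∂κ₂| ≤ S * V₁ := by
    have := oneD_fst _ hgP₁mono
    rw [hcl0, hcl1, hp₁0, hp₁1, sub_zero] at this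
    exact this
  have bP₂ : |∫ v, p₂ (clamp v.2) ∂κ₁ - ∫ v, p₂ (clamp v.2) ∂κ₂| ≤ S * V₂ := by
    have := oneD_snd _ hgP₂mono
    rw [hcl0, hcl1, hp₂0, hp₂1, sub_zero] at this
    exact this
  have bQ₁ : |∫ v, (p₁ (clamp v.1) - j (clamp v.1, 1)) ∂κ₁ -
      ∫ v, (p₁ (clamp v.1) - j (clamp v.1, 1)) ∂κ₂| ≤ S * (2 * V₁) := by
    have h := oneD_fst _ hgQ₁mono
    rw [hcl0, hcl1, hp₁0, hp₁1] at h
    refine h.trans ?_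
    have : V₁ - j (1, 1) - (0 - j (0, 1)) ≤ 2 * V₁ := by
      have := abs_le.mp hφ₁d
      linarith [this.1]
    exact mul_le_mul_of_nonneg_left this hS0
  have bQ₂ : |∫ v, (p₂ (clamp v.2) - j (1, clamp v.2)) ∂κ₁ -
      ∫ v, (p₂ (clamp v.2) - j (1, clamp v.2)) ∂κ₂| ≤ S * (2 * V₂) := by
    have h := oneD_snd _ hgQ₂mono
    rw [hcl0, hcl1, hp₂0, hp₂1] at h
    refine h.trans ?_
    have : V₂ - j (1, 1) - (0 - j (1, 0)) ≤ 2 * V₂ := by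
      have := abs_le.mp hφ₂d
      linarith [this.1]
    exact mul_le_mul_of_nonneg_left this hS0
  have bB := Bpart κ₁ κ₂ h₁ h₂ hS0 hS μ
  -- assemble
  rw [hsplit κ₁ inferInstance h₁, hsplit κ₂ inferInstance h₂]
  have habs : ∀ x₁ x₂ y₁ y₂ z₁ z₂ u₁ u₂ b₁ b₂ c : ℝ,
      |x₁ - y₁ + (z₁ - u₁) + c + b₁ - (x₂ - y₂ + (z₂ - u₂) + c + b₂)| ≤
        |x₁ - x₂| + |y₁ - y₂| + |z₁ - z₂| + |u₁ - u₂| + |b₁ - b₂| := by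
    intro x₁ x₂ y₁ y₂ z₁ z₂ u₁ u₂ b₁ b₂ c
    have e : x₁ - y₁ + (z₁ - u₁) + c + b₁ - (x₂ - y₂ + (z₂ - u₂) + c + b₂) =
        (x₁ - x₂) - (y₁ - y₂) + (z₁ - z₂) - (u₁ - u₂) + (b₁ - b₂) := by ring
    rw [e]
    calc |(x₁ - x₂) - (y₁ - y₂) + (z₁ - z₂) - (u₁ - u₂) + (b₁ - b₂)|
        ≤ |(x₁ - x₂) - (y₁ - y₂) + (z₁ - z₂) - (u₁ - u₂)| + |b₁ - b₂| := abs_add_le _ _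
      _ ≤ |(x₁ - x₂) - (y₁ - y₂) + (z₁ - z₂)| + |u₁ - u₂| + |b₁ - b₂| := by
          have := abs_sub ((x₁ - x₂) - (y₁ - y₂) + (z₁ - z₂)) (u₁ - u₂)
          linarith
      _ ≤ |(x₁ - x₂) - (y₁ - y₂)| + |z₁ - z₂| + |u₁ - u₂| + |b₁ - b₂| := by
          have := abs_add_le ((x₁ - x₂) - (y₁ - y₂)) (z₁ - z₂)
          linarith
      _ ≤ |x₁ - x₂| + |y₁ - y₂| + |z₁ - z₂| + |u₁ - u₂| + |b₁ - b₂| := by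
          have := abs_sub (x₁ - x₂) (y₁ - y₂)
          linarith
  refine le_trans (habs _ _ _ _ _ _ _ _ _ _ _) ?_
  have : S * V₁ + S * (2 * V₁) + S * V₂ + S * (2 * V₂) + S * (μ.totalVariation Isq).toReal ≤
      5 * S * ((μ.totalVariation Isq).toReal + V₁ + V₂) := by
    nlinarith [mul_nonneg hS0 hV₁0, mul_nonneg hS0 hV₂0, mul_nonneg hS0 hTV0]
  linarith [bP₁, bP₂, bQ₁, bQ₂, bB]

end StmtAux

open Copula in
theorem statement_6
    {d : ℕ} {Ω : Type*} [MeasurableSpace Ω] (P : Measure Ω) [IsProbabilityMeasure P]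
    -- the i.i.d. bivariate sample
    (X : ℕ → Ω → ℝ × ℝ) (hXmeas : ∀ k, Measurable (X k))
    (hindep : iIndepFun X P)
    (hident : ∀ k, Measure.map (X k) P = Measure.map (X 0) P)
    -- continuous margins and the copula C of the sample
    (F1 F2 : ℝ → ℝ) (hF1 : Continuous F1) (hF2 : Continuous F2)
    (hm1 : ∀ t : ℝ, (P {ω | (X 0 ω).1 ≤ t}).toReal = F1 t)
    (hm2 : ∀ t : ℝ, (P {ω | (X 0 ω).2 ≤ t}).toReal = F2 t)
    -- C is a copula: uniform margins
    (hcop : ∀ t ∈ Icc (0:ℝ) 1, copOf X P F1 F2 (t, 1) = t ∧ copOf X P F1 F2 (1, t) = t)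
    -- j is continuous, of bounded variation in the Hardy–Krause sense, with
    -- induced signed measure μ on I and edge restrictions of bounded variation
    (j : ℝ × ℝ → ℝ) (hjcont : ContinuousOn j Isq)
    (μ : MeasureTheory.SignedMeasure (ℝ × ℝ))
    (hjμ : ∀ u ∈ Isq, j u = j (u.1, 0) + j (0, u.2) - j (0, 0) +
      μ (Ioc (0:ℝ) u.1 ×ˢ Ioc (0:ℝ) u.2))
    (hjBV1 : BoundedVariationOn (fun t => j (t, 1)) (Icc (0:ℝ) 1))
    (hjBV2 : BoundedVariationOn (fun t => j (1, t)) (Icc (0:ℝ) 1)) :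
    -- |∫_I j d(C_n - C)| ≤ 5 · sup_I |C_n - C| · ∫_I d|j|
    ∀ ω : Ω, ∀ n : ℕ, 1 ≤ n →
      |intCn X j n ω - intCop X P F1 F2 j| ≤
        5 * (⨆ u : Isq, |empCop X n ω (u : ℝ × ℝ) - copOf X P F1 F2 (u : ℝ × ℝ)|) *
          ((μ.totalVariation Isq).toReal +
            (eVariationOn (fun t => j (t, 1)) (Icc (0:ℝ) 1)).toReal +
            (eVariationOn (fun t => j (1, t)) (Icc (0:ℝ) 1)).toReal) := by
  intro ω n hn
  classical
  -- the clamped version of j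
  set jc : ℝ × ℝ → ℝ := fun v => j (StmtAux.clamp v.1, StmtAux.clamp v.2) with hjcdef
  have hclmem : ∀ v : ℝ × ℝ, (StmtAux.clamp v.1, StmtAux.clamp v.2) ∈ Isq :=
    fun v => ⟨StmtAux.clamp_mem _, StmtAux.clamp_mem _⟩
  have hjceq : ∀ v ∈ Isq, jc v = j v := by
    intro v hv
    show j (StmtAux.clamp v.1, StmtAux.clamp v.2) = j v
    rw [StmtAux.clamp_eq hv.1, StmtAux.clamp_eq hv.2]
  have hjccont : Continuous jc :=
    hjcont.comp_continuous
      ((StmtAux.clamp_cont.comp continuous_fst).prodMk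
        (StmtAux.clamp_cont.comp continuous_snd)) hclmem
  -- the margins take values in [0,1]
  have hFmem : ∀ t : ℝ, F1 t ∈ Icc (0:ℝ) 1 := fun t => by
    rw [← hm1 t]; exact ⟨ENNReal.toReal_nonneg, StmtAux.prob_toReal_le_one P _⟩
  have hFmem2 : ∀ t : ℝ, F2 t ∈ Icc (0:ℝ) 1 := fun t => by
    rw [← hm2 t]; exact ⟨ENNReal.toReal_nonneg, StmtAux.prob_toReal_le_one P _⟩
  -- the two measures
  have hTmeas : Measurable fun ω' => (F1 (X 0 ω').1, F2 (X 0 ω').2) :=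
    (hF1.measurable.comp (hXmeas 0).fst).prodMk (hF2.measurable.comp (hXmeas 0).snd)
  set ν : Measure (ℝ × ℝ) := P.map (fun ω' => (F1 (X 0 ω').1, F2 (X 0 ω').2)) with hνdef
  haveI : IsProbabilityMeasure ν := Measure.isProbabilityMeasure_map hTmeas.aemeasurable
  set νn : Measure (ℝ × ℝ) :=
    ((n : ℝ≥0∞)⁻¹) • ∑ k ∈ Finset.range n, Measure.dirac (pseudoObs X n ω k) with hνndef
  have hn0 : (n : ℝ≥0∞) ≠ 0 := Nat.cast_ne_zero.mpr (Nat.one_le_iff_ne_zero.mp hn)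
  have hnR : (n : ℝ) ≠ 0 := Nat.cast_ne_zero.mpr (Nat.one_le_iff_ne_zero.mp hn)
  -- pseudo-observations lie in the unit square
  have hemp1 : ∀ t, empF1 X n ω t ∈ Icc (0:ℝ) 1 := by
    intro t
    constructor
    · apply mul_nonneg (by positivity)
      apply Finset.sum_nonneg; intro i _; split <;> norm_num
    · have hsum : (∑ k ∈ Finset.range n, if (X k ω).1 ≤ t then (1:ℝ) else 0) ≤ n := by
        calc (∑ k ∈ Finset.range n, if (X k ω).1 ≤ t then (1:ℝ) else 0)
            ≤ ∑ _k ∈ Finset.range n, (1:ℝ) :=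
              Finset.sum_le_sum (fun i _ => by split <;> norm_num)
          _ = n := by simp
      calc (n:ℝ)⁻¹ * (∑ k ∈ Finset.range n, if (X k ω).1 ≤ t then (1:ℝ) else 0)
          ≤ (n:ℝ)⁻¹ * n := mul_le_mul_of_nonneg_left hsum (by positivity)
        _ = 1 := by field_simp
  have hemp2 : ∀ t, empF2 X n ω t ∈ Icc (0:ℝ) 1 := by
    intro t
    constructor
    · apply mul_nonneg (by positivity)
      apply Finset.sum_nonneg; intro i _; split <;> norm_num
    · have hsum : (∑ k ∈ Finset.range n, if (X k ω).2 ≤ t then (1:ℝ) else 0) ≤ n := by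
        calc (∑ k ∈ Finset.range n, if (X k ω).2 ≤ t then (1:ℝ) else 0)
            ≤ ∑ _k ∈ Finset.range n, (1:ℝ) :=
              Finset.sum_le_sum (fun i _ => by split <;> norm_num)
          _ = n := by simp
      calc (n:ℝ)⁻¹ * (∑ k ∈ Finset.range n, if (X k ω).2 ≤ t then (1:ℝ) else 0)
          ≤ (n:ℝ)⁻¹ * n := mul_le_mul_of_nonneg_left hsum (by positivity)
        _ = 1 := by field_simp
  have hpkmem : ∀ k, pseudoObs X n ω k ∈ Isq := fun k => ⟨hemp1 _, hemp2 _⟩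
  haveI : IsProbabilityMeasure νn := by
    constructor
    rw [hνndef, Measure.smul_apply, Measure.finset_sum_apply]
    simp only [measure_univ]
    rw [Finset.sum_const, Finset.card_range, nsmul_eq_mul, mul_one, smul_eq_mul,
      ENNReal.inv_mul_cancel hn0 (ENNReal.natCast_ne_top n)]
  -- supports
  have hνsupp : ν Isqᶜ = 0 := by
    rw [hνdef, Measure.map_apply hTmeas StmtAux.Isq_meas.compl]
    have he : (fun ω' => (F1 (X 0 ω').1, F2 (X 0 ω').2)) ⁻¹' Isqᶜ = ∅ := by
      ext ω'
      simp only [mem_preimage, mem_compl_iff, mem_empty_iff_false, iff_false]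
      exact fun h => h ⟨hFmem _, hFmem2 _⟩
    rw [he]
    exact measure_empty
  have hνnsupp : νn Isqᶜ = 0 := by
    rw [hνndef, Measure.smul_apply, Measure.finset_sum_apply]
    have hz : ∀ k ∈ Finset.range n, Measure.dirac (pseudoObs X n ω k) Isqᶜ = 0 := by
      intro k _
      rw [Measure.dirac_apply' _ StmtAux.Isq_meas.compl]
      have hnot : pseudoObs X n ω k ∉ Isqᶜ := fun h => h (hpkmem k)
      exact indicator_of_notMem hnot _
    rw [Finset.sum_eq_zero hz]
    simp
  -- identification of the empirical copula and the true copula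
  have hCn : ∀ u : ℝ × ℝ, (νn (StmtAux.aLL u)).toReal = empCop X n ω u := by
    intro u
    rw [hνndef, Measure.smul_apply, Measure.finset_sum_apply]
    have hterm : ∀ k ∈ Finset.range n, Measure.dirac (pseudoObs X n ω k) (StmtAux.aLL u) =
        (if (pseudoObs X n ω k).1 ≤ u.1 ∧ (pseudoObs X n ω k).2 ≤ u.2 then 1 else 0) := by
      intro k _
      rw [Measure.dirac_apply' _ (StmtAux.aLL_meas u)]
      by_cases h : pseudoObs X n ω k ∈ StmtAux.aLL u
      · rw [indicator_of_mem h]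
        exact (if_pos h).symm
      · rw [indicator_of_notMem h]
        exact (if_neg h).symm
    rw [Finset.sum_congr rfl hterm, smul_eq_mul, ENNReal.toReal_mul,
      ENNReal.toReal_sum (fun k _ => by split <;> simp)]
    show _ = (n : ℝ)⁻¹ * ∑ k ∈ Finset.range n,
      if (pseudoObs X n ω k).1 ≤ u.1 ∧ (pseudoObs X n ω k).2 ≤ u.2 then (1:ℝ) else 0
    congr 1
    · simp
    · refine Finset.sum_congr rfl (fun k _ => ?_)
      split <;> simp
  have hC : ∀ u : ℝ × ℝ, (ν (StmtAux.aLL u)).toReal = copOf X P F1 F2 u := by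
    intro u
    rw [hνdef, Measure.map_apply hTmeas (StmtAux.aLL_meas u)]
    rfl
  -- the sup bound
  set S := ⨆ u : Isq, |empCop X n ω (u : ℝ × ℝ) - copOf X P F1 F2 (u : ℝ × ℝ)| with hSdef
  have hcop01 : ∀ u : ℝ × ℝ, copOf X P F1 F2 u ∈ Icc (0:ℝ) 1 :=
    fun u => ⟨ENNReal.toReal_nonneg, StmtAux.prob_toReal_le_one P _⟩
  have hemp01 : ∀ u : ℝ × ℝ, empCop X n ω u ∈ Icc (0:ℝ) 1 := by
    intro u
    constructor
    · apply mul_nonneg (by positivity)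
      apply Finset.sum_nonneg; intro i _; split <;> norm_num
    · have hsum : (∑ k ∈ Finset.range n,
          if (pseudoObs X n ω k).1 ≤ u.1 ∧ (pseudoObs X n ω k).2 ≤ u.2 then (1:ℝ) else 0) ≤ n := by
        calc (∑ k ∈ Finset.range n,
            if (pseudoObs X n ω k).1 ≤ u.1 ∧ (pseudoObs X n ω k).2 ≤ u.2 then (1:ℝ) else 0)
            ≤ ∑ _k ∈ Finset.range n, (1:ℝ) :=
              Finset.sum_le_sum (fun i _ => by split <;> norm_num)
          _ = n := by simp
      calc (n:ℝ)⁻¹ * (∑ k ∈ Finset.range n,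
            if (pseudoObs X n ω k).1 ≤ u.1 ∧ (pseudoObs X n ω k).2 ≤ u.2 then (1:ℝ) else 0)
          ≤ (n:ℝ)⁻¹ * n := mul_le_mul_of_nonneg_left hsum (by positivity)
        _ = 1 := by field_simp
  have hbdd : BddAbove (Set.range fun u : Isq =>
      |empCop X n ω (u : ℝ × ℝ) - copOf X P F1 F2 (u : ℝ × ℝ)|) := by
    refine ⟨2, ?_⟩
    rintro x ⟨u, rfl⟩
    have hb1 := hemp01 (u : ℝ × ℝ)
    have hb2 := hcop01 (u : ℝ × ℝ)
    rw [abs_le]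
    exact ⟨by linarith [hb1.1, hb2.2], by linarith [hb1.2, hb2.1]⟩
  have hS : ∀ u ∈ Isq, |(νn (StmtAux.aLL u)).toReal - (ν (StmtAux.aLL u)).toReal| ≤ S := by
    intro u hu
    rw [hCn u, hC u]
    exact le_ciSup hbdd ⟨u, hu⟩
  -- the hypotheses of the main bound for jc
  have hjcμ : ∀ u ∈ Isq, jc u = jc (u.1, 0) + jc (0, u.2) - jc (0, 0) +
      μ (Ioc (0:ℝ) u.1 ×ˢ Ioc (0:ℝ) u.2) := by
    intro u hu
    have h0 : ((0:ℝ), (0:ℝ)) ∈ Isq := ⟨⟨le_rfl, zero_le_one⟩, ⟨le_rfl, zero_le_one⟩⟩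
    have ha : (u.1, (0:ℝ)) ∈ Isq := ⟨hu.1, ⟨le_rfl, zero_le_one⟩⟩
    have hb : ((0:ℝ), u.2) ∈ Isq := ⟨⟨le_rfl, zero_le_one⟩, hu.2⟩
    rw [hjceq u hu, hjceq _ ha, hjceq _ hb, hjceq _ h0]
    exact hjμ u hu
  have heq1 : EqOn (fun t => jc (t, 1)) (fun t => j (t, 1)) (Icc (0:ℝ) 1) := fun t ht =>
    hjceq (t, 1) ⟨ht, ⟨zero_le_one, le_rfl⟩⟩
  have heq2 : EqOn (fun t => jc (1, t)) (fun t => j (1, t)) (Icc (0:ℝ) 1) := fun t ht =>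
    hjceq (1, t) ⟨⟨zero_le_one, le_rfl⟩, ht⟩
  have hvar1 : eVariationOn (fun t => jc (t, 1)) (Icc (0:ℝ) 1) =
      eVariationOn (fun t => j (t, 1)) (Icc (0:ℝ) 1) := eVariationOn.eq_of_eqOn heq1
  have hvar2 : eVariationOn (fun t => jc (1, t)) (Icc (0:ℝ) 1) =
      eVariationOn (fun t => j (1, t)) (Icc (0:ℝ) 1) := eVariationOn.eq_of_eqOn heq2
  have hjcBV1 : BoundedVariationOn (fun t => jc (t, 1)) (Icc (0:ℝ) 1) := by
    show eVariationOn (fun t => jc (t, 1)) (Icc (0:ℝ) 1) ≠ ⊤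
    rw [hvar1]
    exact hjBV1
  have hjcBV2 : BoundedVariationOn (fun t => jc (1, t)) (Icc (0:ℝ) 1) := by
    show eVariationOn (fun t => jc (1, t)) (Icc (0:ℝ) 1) ≠ ⊤
    rw [hvar2]
    exact hjBV2
  -- identification of the two integrals
  obtain ⟨C, hC'⟩ := (isCompact_Icc.prod isCompact_Icc).exists_bound_of_continuousOn hjcont
  have hjcbd : ∀ v, ‖jc v‖ ≤ C := fun v => hC' _ (hclmem v)
  have hintCn : intCn X j n ω = ∫ v, jc v ∂νn := by
    rw [hνndef, integral_smul_measure,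
      integral_finset_sum_measure (fun k _ => StmtAux.bdd_meas_integrable _ jc
        hjccont.measurable C (fun v => by rw [← Real.norm_eq_abs]; exact hjcbd v)),
      Finset.sum_congr rfl (fun k _ => integral_dirac jc (pseudoObs X n ω k))]
    show (n : ℝ)⁻¹ * ∑ k ∈ Finset.range n, j (pseudoObs X n ω k) = _
    rw [show ((n:ℝ≥0∞)⁻¹).toReal = (n:ℝ)⁻¹ by simp, smul_eq_mul]
    congr 1
    exact Finset.sum_congr rfl (fun k _ => (hjceq _ (hpkmem k)).symm)
  have hintCop : intCop X P F1 F2 j = ∫ v, jc v ∂ν := by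
    rw [hνdef, integral_map hTmeas.aemeasurable hjccont.aestronglyMeasurable]
    show ∫ ω', j (F1 (X 0 ω').1, F2 (X 0 ω').2) ∂P = _
    refine integral_congr_ae (ae_of_all _ fun ω' => ?_)
    exact (hjceq _ ⟨hFmem _, hFmem2 _⟩).symm
  rw [hintCn, hintCop, ← hvar1, ← hvar2]
  exact StmtAux.main_bound νn ν hνnsupp hνsupp hS jc μ hjcμ hjcBV1 hjcBV2

end
end

section
/- Suppose θ_T = θ₀, i.e., c_{θ_T} ≡ 1 on I, that θ ↦ c_θ(u₁,u₂) is differentiable at θ₀ for λ-a.e. (u₁,u₂), that differentiation under the integral sign is justified for θ ↦ ∫_I φ'(1/c_θ) dλ and θ ↦ ∫_I c_θ dλ at θ₀ (so that ∫_I ċ_{θ₀} dλ = 0), and that φ is twice differentiable at 1. Then (∂/∂θ) m(θ₀,u₁,u₂) = φ''(1) · ċ_{θ₀}(u₁,u₂) for λ-a.e. (u₁,u₂), and consequently S := ∫_I φ''(1/c_{θ₀}) ( ċ_{θ₀} ċ_{θ₀}ᵀ / c_{θ₀}³ ) dλ = φ''(1) · I_{θ₀}, where I_{θ₀} := ∫_I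 ċ_{θ₀} ċ_{θ₀}ᵀ dλ is the Fisher information matrix of the copula model at the independence point. -/
open MeasureTheory ProbabilityTheory Filter Set Asymptotics
open scoped Topology ENNReal NNReal

noncomputable section

open Copula in
theorem statement_9
    {d : ℕ}
    -- the convex function φ, nonnegative with φ(1)=0, C² on the interior of its domain
    (φ : ℝ → ℝ) (Dom : Set ℝ) (hDomConv : Convex ℝ Dom) (h1Dom : 1 ∈ interior Dom)
    (hφ1 : φ 1 = 0) (hφnonneg : ∀ x ∈ Dom, 0 ≤ φ x) (hφconv : ConvexOn ℝ Dom φ)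
    (hφreg : ContDiffOn ℝ 2 φ (interior Dom))
    -- the parametric family of copula densities: positive, with uniform margins
    (c : (Fin d → ℝ) → ℝ × ℝ → ℝ) (hcpos : ∀ θ, ∀ u ∈ Isq, 0 < c θ u)
    (hmarg : ∀ θ, ∀ t ∈ Icc (0:ℝ) 1, copCdf c θ (t, 1) = t ∧ copCdf c θ (1, t) = t)
    -- θ_T = θ₀: the independence copula, c_{θ₀} ≡ 1
    (θ0 : Fin d → ℝ) (hθ0 : ∀ u ∈ Isq, c θ0 u = 1)
    -- θ ↦ c_θ(u) differentiable at θ₀ for λ-a.e. u, with gradient ċ_{θ₀}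
    (cdot : ℝ × ℝ → Fin d → ℝ)
    (hcder : ∀ᵐ u ∂(volume.restrict Isq), ∀ ℓ : Fin d,
      HasDerivAt (fun t => c (Function.update θ0 ℓ t) u) (cdot u ℓ) (θ0 ℓ))
    -- φ is twice differentiable at 1
    (hφ2 : ContDiffAt ℝ 2 φ 1)
    -- differentiation under the integral sign at θ₀ for θ ↦ ∫ φ'(1/c_θ) dλ
    (hDUI1 : ∀ ℓ : Fin d,
      HasDerivAt (fun t => ∫ v in Isq, deriv φ (1 / c (Function.update θ0 ℓ t) v))
        (∫ v in Isq, deriv (fun t => deriv φ (1 / c (Function.update θ0 ℓ t) v)) (θ0 ℓ))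
        (θ0 ℓ))
    -- differentiation under the integral sign at θ₀ for θ ↦ ∫ c_θ dλ
    (hDUI2 : ∀ ℓ : Fin d,
      HasDerivAt (fun t => ∫ v in Isq, c (Function.update θ0 ℓ t) v)
        (∫ v in Isq, cdot v ℓ) (θ0 ℓ))
    -- so that ∫ ċ_{θ₀} dλ = 0
    (hzero : ∀ ℓ : Fin d, (∫ v in Isq, cdot v ℓ) = 0) :
    -- (∂/∂θ)m(θ₀,·) = φ''(1) ċ_{θ₀} a.e., and S = φ''(1) I_{θ₀}
    (∀ᵐ u ∂(volume.restrict Isq), ∀ ℓ : Fin d,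
      pdθ (fun θ => mFun φ c θ u) ℓ θ0 = deriv (deriv φ) 1 * cdot u ℓ) ∧
    (∀ ℓ ℓ' : Fin d,
      (∫ u in Isq, deriv (deriv φ) (1 / c θ0 u) * (cdot u ℓ * cdot u ℓ' / (c θ0 u) ^ 3)) =
        deriv (deriv φ) 1 * ∫ u in Isq, cdot u ℓ * cdot u ℓ') := by
  have hIsq : MeasurableSet Isq := measurableSet_Icc.prod measurableSet_Icc
  set D2 : ℝ := deriv (deriv φ) 1 with hD2def
  have hopen : IsOpen (interior Dom) := isOpen_interior
  have hd1 : ContDiffOn ℝ 1 (deriv φ) (interior Dom) :=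
    hφreg.deriv_of_isOpen hopen (by norm_num)
  have hφ'diff : DifferentiableAt ℝ (deriv φ) 1 :=
    (hd1.differentiableOn (by norm_num)).differentiableAt (hopen.mem_nhds h1Dom)
  have hD2 : HasDerivAt (deriv φ) D2 1 := hφ'diff.hasDerivAt
  have hφdiff : HasDerivAt φ (deriv φ 1) 1 :=
    ((hφreg.differentiableOn (by norm_num)).differentiableAt
      (hopen.mem_nhds h1Dom)).hasDerivAt
  -- pointwise chain rule computations
  have key : ∀ u ∈ Isq, ∀ ℓ : Fin d,
      HasDerivAt (fun t => c (Function.update θ0 ℓ t) u) (cdot u ℓ) (θ0 ℓ) →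
      HasDerivAt (fun t => deriv φ (1 / c (Function.update θ0 ℓ t) u))
        (D2 * -(cdot u ℓ)) (θ0 ℓ) ∧
      HasDerivAt (fun t => K2 φ c (Function.update θ0 ℓ t) u)
        (-(D2 * cdot u ℓ)) (θ0 ℓ) := by
    intro u hu ℓ hc
    have hupd : Function.update θ0 ℓ (θ0 ℓ) = θ0 := Function.update_eq_self ℓ θ0
    have hc1 : c (Function.update θ0 ℓ (θ0 ℓ)) u = 1 := by rw [hupd]; exact hθ0 u hu
    have h1 : (1 : ℝ) / c (Function.update θ0 ℓ (θ0 ℓ)) u = 1 := by rw [hc1]; norm_num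
    have hinv : HasDerivAt (fun t => 1 / c (Function.update θ0 ℓ t) u)
        (-(cdot u ℓ)) (θ0 ℓ) := by
      have h := hc.inv (by rw [hc1]; norm_num)
      simpa [one_div, hc1, hθ0 u hu, Pi.inv_def] using h
    have hD2' : HasDerivAt (deriv φ) D2 (1 / c (Function.update θ0 ℓ (θ0 ℓ)) u) := by
      rw [h1]; exact hD2
    have hK1 : HasDerivAt (fun t => deriv φ (1 / c (Function.update θ0 ℓ t) u))
        (D2 * -(cdot u ℓ)) (θ0 ℓ) := by
      simpa [Function.comp_def] using hD2'.comp (θ0 ℓ) hinv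
    refine ⟨hK1, ?_⟩
    have hφ1' : HasDerivAt φ (deriv φ 1) (1 / c (Function.update θ0 ℓ (θ0 ℓ)) u) := by
      rw [h1]; exact hφdiff
    have hsub := (hK1.mul hinv).sub (hφ1'.comp (θ0 ℓ) hinv)
    have hfe : (fun t => K2 φ c (Function.update θ0 ℓ t) u)
        = fun t => deriv φ (1 / c (Function.update θ0 ℓ t) u) *
            (1 / c (Function.update θ0 ℓ t) u) - φ (1 / c (Function.update θ0 ℓ t) u) := by
      funext t
      simp only [K2]
      rw [div_eq_mul_one_div (deriv φ (1 / c (Function.update θ0 ℓ t) u))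
        (c (Function.update θ0 ℓ t) u)]
    have hveq : -(D2 * cdot u ℓ) =
        D2 * -(cdot u ℓ) * (1 / c (Function.update θ0 ℓ (θ0 ℓ)) u) +
          deriv φ (1 / c (Function.update θ0 ℓ (θ0 ℓ)) u) * -(cdot u ℓ) -
          deriv φ 1 * -(cdot u ℓ) := by
      rw [h1]; ring
    rw [hfe, hveq]
    exact hsub
  -- derivative of the K1-integral term is 0
  have hInt : ∀ ℓ : Fin d,
      HasDerivAt (fun t => ∫ v in Isq, deriv φ (1 / c (Function.update θ0 ℓ t) v))
        0 (θ0 ℓ) := by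
    intro ℓ
    have hcong : ∀ᵐ v ∂(volume.restrict Isq),
        deriv (fun t => deriv φ (1 / c (Function.update θ0 ℓ t) v)) (θ0 ℓ)
          = D2 * -(cdot v ℓ) := by
      filter_upwards [hcder, ae_restrict_mem hIsq] with v hv hvmem
      exact ((key v hvmem ℓ (hv ℓ)).1).deriv
    have h0 : (∫ v in Isq,
        deriv (fun t => deriv φ (1 / c (Function.update θ0 ℓ t) v)) (θ0 ℓ)) = 0 := by
      rw [integral_congr_ae hcong, integral_const_mul, integral_neg, hzero ℓ,
        neg_zero, mul_zero]
    have h := hDUI1 ℓ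
    rwa [h0] at h
  constructor
  · filter_upwards [hcder, ae_restrict_mem hIsq] with u hu humem
    intro ℓ
    have hm : HasDerivAt (fun t => mFun φ c (Function.update θ0 ℓ t) u)
        (D2 * cdot u ℓ) (θ0 ℓ) := by
      have h := (hInt ℓ).sub (key u humem ℓ (hu ℓ)).2
      simpa [mFun, K1, Pi.sub_def] using h
    simpa [pdθ] using hm.deriv
  · intro ℓ ℓ'
    have heq : ∀ u ∈ Isq,
        deriv (deriv φ) (1 / c θ0 u) * (cdot u ℓ * cdot u ℓ' / (c θ0 u) ^ 3)
          = D2 * (cdot u ℓ * cdot u ℓ') := by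
      intro u hu
      rw [hθ0 u hu]
      norm_num
      exact Or.inl hD2def.symm
    rw [setIntegral_congr_fun hIsq heq, integral_const_mul]

end
end

section
/- Let θ_T ∈ Θ_e and θ ∈ Θ_e, and suppose that for λ-a.e. (u₁,u₂) the values 1/c_θ(u₁,u₂) and 1/c_{θ_T}(u₁,u₂) lie in the interior of the domain of φ, and that all the integrals below are finite. Then ∫_I m(θ,u₁,u₂) dC_{θ_T}(u₁,u₂) ≤ D_φ(θ₀,θ_T), with equality for θ = θ_T; hence D_φ(θ₀,θ_T) = sup_{θ ∈ Θ_e} ∫_I m(θ,u₁,u₂) dC_{θ_T}(u₁,u₂) and the supremum is attained at θ = θ_T. If moreover φ is strictly convex on the interior of its domain, then equality holds for a given θ if and only if c_θ = c_{θ_T} λ-almost everywhere on I. -/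
open MeasureTheory ProbabilityTheory Filter Set Asymptotics
open scoped Topology ENNReal NNReal

noncomputable section

section AuxConvex

open Real

private lemma mtan : Measurable Real.tan := by
  have h : Real.tan = fun x => Real.sin x / Real.cos x := funext fun x => Real.tan_eq_sin_div_cos x
  rw [h]
  exact Real.measurable_sin.div Real.measurable_cos

private lemma grad_le {Dom : Set ℝ} {f : ℝ → ℝ} (hconv : ConvexOn ℝ Dom f)
    (hdiff : DifferentiableOn ℝ f (interior Dom)) {x y : ℝ}
    (hx : x ∈ interior Dom) (hy : y ∈ interior Dom) :
    f x + deriv f x * (y - x) ≤ f y := by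
  have hconv' : ConvexOn ℝ (interior Dom) f := hconv.subset interior_subset hconv.1.interior
  have hdx : DifferentiableAt ℝ f x := hdiff.differentiableAt (isOpen_interior.mem_nhds hx)
  rcases lt_trichotomy x y with h | rfl | h
  · have h1 := hconv'.deriv_le_slope hx hy h hdx
    rw [slope_def_field, le_div_iff₀ (sub_pos.mpr h)] at h1
    nlinarith [h1]
  · simp
  · have h1 := hconv'.slope_le_deriv hy hx h hdx
    rw [slope_def_field, div_le_iff₀ (sub_pos.mpr h)] at h1
    nlinarith [h1]

private lemma grad_lt {Dom : Set ℝ} {f : ℝ → ℝ} (hsc : StrictConvexOn ℝ (interior Dom) f)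
    (hdiff : DifferentiableOn ℝ f (interior Dom)) {x y : ℝ}
    (hx : x ∈ interior Dom) (hy : y ∈ interior Dom) (hne : x ≠ y) :
    f x + deriv f x * (y - x) < f y := by
  have hdx : DifferentiableAt ℝ f x := hdiff.differentiableAt (isOpen_interior.mem_nhds hx)
  rcases hne.lt_or_gt with h | h
  · have h1 := hsc.deriv_lt_slope hx hy h hdx
    rw [slope_def_field, lt_div_iff₀ (sub_pos.mpr h)] at h1
    nlinarith [h1]
  · have h1 := hsc.slope_lt_deriv hy hx h hdx
    rw [slope_def_field, div_lt_iff₀ (sub_pos.mpr h)] at h1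
    nlinarith [h1]

private lemma psi_key {Dom : Set ℝ} {f : ℝ → ℝ} (hconv : ConvexOn ℝ Dom f)
    (hdiff : DifferentiableOn ℝ f (interior Dom)) {x t : ℝ}
    (hx : x ∈ interior Dom ∩ Ioi 0) (ht : t ∈ interior Dom ∩ Ioi 0)
    (hpsi : deriv f t * t - f t ≤ deriv f x * x - f x) :
    deriv f t ≤ deriv f x := by
  have hconv' : ConvexOn ℝ (interior Dom) f := hconv.subset interior_subset hconv.1.interior
  have hmono := hconv'.monotoneOn_deriv
    (fun z hz => hdiff.differentiableAt (isOpen_interior.mem_nhds hz))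
  rcases le_or_gt t x with h | h
  · exact hmono ht.1 hx.1 h
  · have hg : f t + deriv f t * (x - t) ≤ f x := grad_le hconv hdiff ht.1 hx.1
    have hxpos : (0:ℝ) < x := hx.2
    have h2 : deriv f t * x ≤ deriv f x * x := by nlinarith [hg, hpsi]
    exact le_of_mul_le_mul_right h2 hxpos

private def gsup (f : ℝ → ℝ) (s : Set ℝ) (y : ℝ) : ℝ :=
  sSup (insert (-2) ((fun t => Real.arctan (deriv f t)) '' {t ∈ s | deriv f t * t - f t ≤ y}))

private lemma gsup_bdd (f : ℝ → ℝ) (s : Set ℝ) (y : ℝ) :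
    BddAbove (insert (-2) ((fun t => Real.arctan (deriv f t)) ''
      {t ∈ s | deriv f t * t - f t ≤ y})) := by
  refine ⟨2, ?_⟩
  rintro z hz
  simp only [Set.mem_insert_iff, Set.mem_image] at hz
  rcases hz with rfl | ⟨t, _, rfl⟩
  · norm_num
  · have h1 := Real.arctan_lt_pi_div_two (deriv f t)
    have h2 := Real.pi_le_four
    linarith

private lemma gsup_mono (f : ℝ → ℝ) (s : Set ℝ) : Monotone (gsup f s) := by
  intro y1 y2 h
  refine csSup_le_csSup (gsup_bdd f s y2) ⟨-2, Set.mem_insert _ _⟩ ?_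
  apply Set.insert_subset_insert
  apply Set.image_mono
  exact fun t ht => ⟨ht.1, ht.2.trans h⟩

private lemma gsup_eval {Dom : Set ℝ} {f : ℝ → ℝ} (hconv : ConvexOn ℝ Dom f)
    (hdiff : DifferentiableOn ℝ f (interior Dom)) {x : ℝ}
    (hx : x ∈ interior Dom ∩ Ioi 0) :
    gsup f (interior Dom ∩ Ioi 0) (deriv f x * x - f x) = Real.arctan (deriv f x) := by
  apply le_antisymm
  · apply csSup_le ⟨-2, Set.mem_insert _ _⟩
    rintro z hz
    simp only [Set.mem_insert_iff, Set.mem_image, Set.mem_sep_iff] at hz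
    rcases hz with rfl | ⟨t, ⟨hts, hpsi⟩, rfl⟩
    · have h1 := Real.neg_pi_div_two_lt_arctan (deriv f x)
      have h2 := Real.pi_le_four
      linarith
    · exact Real.arctan_strictMono.monotone (psi_key hconv hdiff hx hts hpsi)
  · exact le_csSup (gsup_bdd f _ _) (Set.mem_insert_of_mem _ ⟨x, ⟨hx, le_rfl⟩, rfl⟩)

end AuxConvex


open Copula in
theorem statement_11
    {d : ℕ}
    -- the convex function φ, nonnegative with φ(1)=0, differentiable on the interior of its domain
    (φ : ℝ → ℝ) (Dom : Set ℝ) (hDomConv : Convex ℝ Dom) (h1Dom : 1 ∈ interior Dom)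
    (hφ1 : φ 1 = 0) (hφnonneg : ∀ x ∈ Dom, 0 ≤ φ x) (hφconv : ConvexOn ℝ Dom φ)
    (hφdiff : DifferentiableOn ℝ φ (interior Dom))
    -- the parametric family of copula densities: positive, with uniform margins
    (c : (Fin d → ℝ) → ℝ × ℝ → ℝ) (hcpos : ∀ θ, ∀ u ∈ Isq, 0 < c θ u)
    (hmarg : ∀ θ, ∀ t ∈ Icc (0:ℝ) 1, copCdf c θ (t, 1) = t ∧ copCdf c θ (1, t) = t)
    (θT : Fin d → ℝ) (hθT : θT ∈ ThetaE φ c)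
    -- 1/c_θ and 1/c_{θ_T} take values in the interior of the domain of φ
    (hmem : ∀ θ ∈ ThetaE φ c, ∀ᵐ u ∂(volume.restrict Isq), 1 / c θ u ∈ interior Dom)
    (hmemT : ∀ᵐ u ∂(volume.restrict Isq), 1 / c θT u ∈ interior Dom)
    -- all integrals involved are finite
    (hint : ∀ θ ∈ ThetaE φ c, IntegrableOn (fun u => mFun φ c θ u * c θT u) Isq volume)
    (hintD : IntegrableOn (fun u => φ (1 / c θT u) * c θT u) Isq volume) :
    -- ∫ m(θ,·) dC_{θ_T} ≤ D_φ(θ₀,θ_T), with equality at θ = θ_T; the sup over Θ_e is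
    -- attained at θ_T; under strict convexity equality holds iff c_θ = c_{θ_T} a.e.
    (∀ θ ∈ ThetaE φ c,
      (∫ u in Isq, mFun φ c θ u * c θT u) ≤ ∫ u in Isq, φ (1 / c θT u) * c θT u) ∧
    ((∫ u in Isq, mFun φ c θT u * c θT u) = ∫ u in Isq, φ (1 / c θT u) * c θT u) ∧
    IsGreatest {x : ℝ | ∃ θ ∈ ThetaE φ c, x = ∫ u in Isq, mFun φ c θ u * c θT u}
      (∫ u in Isq, φ (1 / c θT u) * c θT u) ∧
    (StrictConvexOn ℝ (interior Dom) φ →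
      ∀ θ ∈ ThetaE φ c,
        ((∫ u in Isq, mFun φ c θ u * c θT u) = (∫ u in Isq, φ (1 / c θT u) * c θT u) ↔
          ∀ᵐ u ∂(volume.restrict Isq), c θ u = c θT u)) := by
  classical
  have hIsq : MeasurableSet Isq := measurableSet_Icc.prod measurableSet_Icc
  have haeIsq : ∀ᵐ u ∂(volume.restrict Isq), u ∈ Isq := ae_restrict_mem hIsq
  -- the copula density integrates to 1
  have hone : (∫ u in Isq, c θT u) = 1 := by
    have h := (hmarg θT 1 (by norm_num : (1:ℝ) ∈ Icc (0:ℝ) 1)).1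
    simpa [copCdf, Isq] using h
  have hcT_int : IntegrableOn (c θT) Isq volume := by
    by_contra h
    have h0 : (∫ u in Isq, c θT u) = 0 := integral_undef h
    rw [hone] at h0; norm_num at h0
  have hcT_ae : AEMeasurable (c θT) (volume.restrict Isq) := hcT_int.aemeasurable
  have hD_int : Integrable (fun u => φ (1 / c θT u) * c θT u) (volume.restrict Isq) := hintD
  -- pointwise identity for K2
  have hK2eq : ∀ θ : Fin d → ℝ, ∀ u : ℝ × ℝ,
      K2 φ c θ u = deriv φ (1 / c θ u) * (1 / c θ u) - φ (1 / c θ u) := by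
    intro θ u
    show deriv φ (1 / c θ u) / c θ u - φ (1 / c θ u) = _
    rw [div_eq_mul_one_div]
  -- the main block of facts for each θ in Θ_e
  have main : ∀ θ ∈ ThetaE φ c,
      Integrable (fun u => K2 φ c θ u * c θT u) (volume.restrict Isq) ∧
      Integrable (K1 φ c θ) (volume.restrict Isq) ∧
      ((∫ u in Isq, mFun φ c θ u * c θT u)
        = (∫ v in Isq, K1 φ c θ v) - ∫ u in Isq, K2 φ c θ u * c θT u) ∧
      (∀ᵐ u ∂(volume.restrict Isq),
        K1 φ c θ u ≤ (K2 φ c θ u + φ (1 / c θT u)) * c θT u) ∧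
      Integrable (fun u => (K2 φ c θ u + φ (1 / c θT u)) * c θT u) (volume.restrict Isq) := by
    intro θ hθ
    have hmint : Integrable (fun u => mFun φ c θ u * c θT u) (volume.restrict Isq) := hint θ hθ
    have hK2c_int : Integrable (fun u => K2 φ c θ u * c θT u) (volume.restrict Isq) := by
      have h1 : (fun u => K2 φ c θ u * c θT u)
          = fun u => (∫ v in Isq, K1 φ c θ v) * c θT u - mFun φ c θ u * c θT u := by
        funext u; simp only [mFun]; ring
      rw [h1]
      exact (hcT_int.const_mul _).sub hmint
    have hsplit : (∫ u in Isq, mFun φ c θ u * c θT u)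
        = (∫ v in Isq, K1 φ c θ v) - ∫ u in Isq, K2 φ c θ u * c θT u := by
      have h1 : (fun u => mFun φ c θ u * c θT u)
          = fun u => (∫ v in Isq, K1 φ c θ v) * c θT u - K2 φ c θ u * c θT u := by
        funext u; simp only [mFun]; ring
      rw [h1, integral_sub (hcT_int.const_mul _) hK2c_int, integral_const_mul, hone, mul_one]
    -- a.e. measurability of K2
    have hK2meas : AEMeasurable (K2 φ c θ) (volume.restrict Isq) := by
      have h1 : AEMeasurable (fun u => K2 φ c θ u * c θT u * (c θT u)⁻¹)
          (volume.restrict Isq) := hK2c_int.aemeasurable.mul hcT_ae.inv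
      refine h1.congr ?_
      filter_upwards [haeIsq] with u hu
      have hc : c θT u ≠ 0 := (hcpos θT u hu).ne'
      field_simp
    -- a.e. measurability of K1 via the monotone-rearrangement trick
    have hK1meas : AEMeasurable (K1 φ c θ) (volume.restrict Isq) := by
      have hx_mem : ∀ᵐ u ∂(volume.restrict Isq), (1 / c θ u) ∈ interior Dom ∩ Ioi 0 := by
        filter_upwards [haeIsq, hmem θ hθ] with u hu hD
        exact ⟨hD, one_div_pos.mpr (hcpos θ u hu)⟩
      have harct : AEMeasurable (fun u => Real.arctan (K1 φ c θ u)) (volume.restrict Isq) := by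
        have h1 : AEMeasurable (fun u => gsup φ (interior Dom ∩ Ioi 0) (K2 φ c θ u))
            (volume.restrict Isq) :=
          (gsup_mono φ _).measurable.comp_aemeasurable hK2meas
        refine h1.congr ?_
        filter_upwards [hx_mem] with u hu
        rw [hK2eq θ u]
        exact gsup_eval hφconv hφdiff hu
      have h2 : K1 φ c θ = fun u => Real.tan (Real.arctan (K1 φ c θ u)) :=
        funext fun u => (Real.tan_arctan _).symm
      rw [h2]
      exact mtan.comp_aemeasurable harct
    have hK1abs : IntegrableOn (fun v => |K1 φ c θ v|) Isq volume := hθ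
    have hK1int : Integrable (K1 φ c θ) (volume.restrict Isq) := by
      refine (integrable_norm_iff hK1meas.aestronglyMeasurable).mp ?_
      simp only [Real.norm_eq_abs]
      exact hK1abs
    have hle : ∀ᵐ u ∂(volume.restrict Isq),
        K1 φ c θ u ≤ (K2 φ c θ u + φ (1 / c θT u)) * c θT u := by
      filter_upwards [haeIsq, hmem θ hθ, hmemT] with u hu hxD hyD
      have hcθ : 0 < c θ u := hcpos θ u hu
      have hcT : 0 < c θT u := hcpos θT u hu
      have hycT : (1 / c θT u) * c θT u = 1 := by field_simp
      have hgrad : φ (1 / c θ u) + deriv φ (1 / c θ u) * (1 / c θT u - 1 / c θ u)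
          ≤ φ (1 / c θT u) := grad_le hφconv hφdiff hxD hyD
      have hK1x : K1 φ c θ u = deriv φ (1 / c θ u) := rfl
      rw [hK1x, hK2eq θ u]
      have h3 : deriv φ (1 / c θ u) * (1 / c θT u)
          ≤ deriv φ (1 / c θ u) * (1 / c θ u) - φ (1 / c θ u) + φ (1 / c θT u) := by
        nlinarith [hgrad]
      calc deriv φ (1 / c θ u)
          = (deriv φ (1 / c θ u) * (1 / c θT u)) * c θT u := by
            rw [mul_assoc, hycT, mul_one]
        _ ≤ (deriv φ (1 / c θ u) * (1 / c θ u) - φ (1 / c θ u) + φ (1 / c θT u)) * c θT u :=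
            mul_le_mul_of_nonneg_right h3 hcT.le
    have hhint : Integrable (fun u => (K2 φ c θ u + φ (1 / c θT u)) * c θT u)
        (volume.restrict Isq) := by
      have h1 : (fun u => (K2 φ c θ u + φ (1 / c θT u)) * c θT u)
          = fun u => K2 φ c θ u * c θT u + φ (1 / c θT u) * c θT u := by
        funext u; ring
      rw [h1]
      exact hK2c_int.add hD_int
    exact ⟨hK2c_int, hK1int, hsplit, hle, hhint⟩
  -- the h-integral splits
  have hh_split : ∀ θ : Fin d → ℝ,
      Integrable (fun u => K2 φ c θ u * c θT u) (volume.restrict Isq) →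
      (∫ u in Isq, (K2 φ c θ u + φ (1 / c θT u)) * c θT u)
        = (∫ u in Isq, K2 φ c θ u * c θT u) + ∫ u in Isq, φ (1 / c θT u) * c θT u := by
    intro θ hK2c
    have h1 : (fun u => (K2 φ c θ u + φ (1 / c θT u)) * c θT u)
        = fun u => K2 φ c θ u * c θT u + φ (1 / c θT u) * c θT u := by
      funext u; ring
    rw [h1]
    exact integral_add hK2c hD_int
  -- the inequality
  have hineq : ∀ θ ∈ ThetaE φ c,
      (∫ u in Isq, mFun φ c θ u * c θT u) ≤ ∫ u in Isq, φ (1 / c θT u) * c θT u := by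
    intro θ hθ
    obtain ⟨hK2c, hK1, hsplit, hle, hhint⟩ := main θ hθ
    have hAle := integral_mono_ae hK1 hhint hle
    rw [hh_split θ hK2c] at hAle
    rw [hsplit]
    linarith
  -- equality at θT
  have heqT : (∫ u in Isq, mFun φ c θT u * c θT u) = ∫ u in Isq, φ (1 / c θT u) * c θT u := by
    obtain ⟨hK2c, hK1, hsplit, hle, hhint⟩ := main θT hθT
    have hpt : ∀ᵐ u ∂(volume.restrict Isq),
        K1 φ c θT u = (K2 φ c θT u + φ (1 / c θT u)) * c θT u := by
      filter_upwards [haeIsq] with u hu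
      have hcT : 0 < c θT u := hcpos θT u hu
      have hycT : (1 / c θT u) * c θT u = 1 := by field_simp
      have hK1x : K1 φ c θT u = deriv φ (1 / c θT u) := rfl
      rw [hK1x, hK2eq θT u]
      calc deriv φ (1 / c θT u)
          = (deriv φ (1 / c θT u) * (1 / c θT u)) * c θT u := by
            rw [mul_assoc, hycT, mul_one]
        _ = (deriv φ (1 / c θT u) * (1 / c θT u) - φ (1 / c θT u) + φ (1 / c θT u))
              * c θT u := by ring
    have hA : (∫ v in Isq, K1 φ c θT v)
        = ∫ u in Isq, (K2 φ c θT u + φ (1 / c θT u)) * c θT u := integral_congr_ae hpt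
    rw [hsplit, hA, hh_split θT hK2c]
    ring
  refine ⟨hineq, heqT, ⟨⟨θT, hθT, heqT.symm⟩, ?_⟩, ?_⟩
  · rintro x ⟨θ, hθ, rfl⟩
    exact hineq θ hθ
  · -- strict convexity: equality iff densities agree a.e.
    intro hsc θ hθ
    obtain ⟨hK2c, hK1, hsplit, hle, hhint⟩ := main θ hθ
    constructor
    · intro heq
      -- equality forces the a.e. identity
      have hA : (∫ v in Isq, K1 φ c θ v)
          = ∫ u in Isq, (K2 φ c θ u + φ (1 / c θT u)) * c θT u := by
        rw [hh_split θ hK2c]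
        rw [hsplit] at heq
        linarith
      have hzero : (∫ u in Isq,
          ((K2 φ c θ u + φ (1 / c θT u)) * c θT u - K1 φ c θ u)) = 0 := by
        rw [integral_sub hhint hK1]
        linarith
      have hae0 := (integral_eq_zero_iff_of_nonneg_ae
        (hle.mono fun u hu => sub_nonneg.mpr hu) (hhint.sub hK1)).mp hzero
      filter_upwards [hae0, haeIsq, hmem θ hθ, hmemT] with u h0 hu hxD hyD
      have hcθ : 0 < c θ u := hcpos θ u hu
      have hcT : 0 < c θT u := hcpos θT u hu
      have hycT : (1 / c θT u) * c θT u = 1 := by field_simp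
      have h0' : (K2 φ c θ u + φ (1 / c θT u)) * c θT u - K1 φ c θ u = 0 := h0
      have hK1x : K1 φ c θ u = deriv φ (1 / c θ u) := rfl
      rw [hK1x, hK2eq θ u] at h0'
      have h3 : (deriv φ (1 / c θ u) * (1 / c θ u) - φ (1 / c θ u) + φ (1 / c θT u)) * c θT u
          = (deriv φ (1 / c θ u) * (1 / c θT u)) * c θT u := by
        rw [mul_assoc, hycT, mul_one]
        linarith
      have h4 := mul_right_cancel₀ hcT.ne' h3
      -- h4 : d x * x - φ x + φ y = d x * y
      by_contra hne
      have hxyne : (1 : ℝ) / c θ u ≠ 1 / c θT u := by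
        intro h
        apply hne
        have := one_div_one_div (c θ u)
        rw [← one_div_one_div (c θ u), h, one_div_one_div]
      have hlt := grad_lt hsc hφdiff hxD hyD hxyne
      nlinarith [hlt, h4]
    · intro hc
      have hK1ae : K1 φ c θ =ᵐ[volume.restrict Isq] K1 φ c θT := by
        filter_upwards [hc] with u hu
        simp only [K1, hu]
      have hK2ae : (fun u => K2 φ c θ u * c θT u)
          =ᵐ[volume.restrict Isq] fun u => K2 φ c θT u * c θT u := by
        filter_upwards [hc] with u hu
        simp only [K2, hu]
      obtain ⟨hK2cT, hK1T, hsplitT, hleT, hhintT⟩ := main θT hθT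
      rw [hsplit, integral_congr_ae hK1ae, integral_congr_ae hK2ae, ← hsplitT, heqT]


end
end

section
/- Let σ > 0, D > 0, q > 0 and z ≥ 0 be real numbers, and set a := σ²z², b := qD and n₀ := ( (a+b) − √( a(a+2b) ) ) / (2D²). Then n₀ > 0 and √n₀ · ( q/(2n₀) − D ) / σ = z; equivalently, if z = Φ⁻¹(1−β) for β ∈ (0,1] with z ≥ 0 (Φ the standard normal cumulative distribution function), then n₀ is a root of the equation β = 1 − Φ( (√n/σ) ( q/(2n) − D ) ) in n. -/
open MeasureTheory ProbabilityTheory Filter Set Asymptotics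
open scoped Topology ENNReal NNReal

noncomputable section

theorem statement_15 (σ D q z a b n₀ : ℝ)
    (hσ : 0 < σ) (hD : 0 < D) (hq : 0 < q) (hz : 0 ≤ z)
    (ha : a = σ ^ 2 * z ^ 2) (hb : b = q * D)
    (hn₀ : n₀ = ((a + b) - Real.sqrt (a * (a + 2 * b))) / (2 * D ^ 2)) :
    0 < n₀ ∧
    Real.sqrt n₀ * (q / (2 * n₀) - D) / σ = z ∧
    ∀ β ∈ Set.Ioc (0:ℝ) 1,
      cdf (gaussianReal 0 1) z = 1 - β →
      β = 1 - cdf (gaussianReal 0 1) (Real.sqrt n₀ / σ * (q / (2 * n₀) - D)) := by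
  have ha0 : 0 ≤ a := by rw [ha]; positivity
  have hb0 : 0 < b := by rw [hb]; positivity
  set s := Real.sqrt (a * (a + 2 * b)) with hs
  have hs0 : 0 ≤ s := Real.sqrt_nonneg _
  have hs2 : s ^ 2 = a * (a + 2 * b) := Real.sq_sqrt (by positivity)
  have hslt : s < a + b := by
    rw [hs, show a * (a + 2 * b) = Real.sqrt ((a*(a+2*b))) ^2 from (Real.sq_sqrt (by positivity)).symm] at hs2
    rw [hs]
    rw [Real.sqrt_lt' (by linarith)]
    nlinarith
  have hsge : a ≤ s := by
    rw [hs]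
    calc a = Real.sqrt (a ^ 2) := (Real.sqrt_sq ha0).symm
    _ ≤ _ := Real.sqrt_le_sqrt (by nlinarith)
  have hn0 : 0 < n₀ := by
    rw [hn₀]
    apply div_pos (by linarith) (by positivity)
  have hn2 : 2 * D ^ 2 * n₀ = a + b - s := by
    rw [hn₀]; field_simp
  have hsa : Real.sqrt a = σ * z := by
    rw [ha, show σ ^ 2 * z ^ 2 = (σ * z) ^ 2 by ring, Real.sqrt_sq (by positivity)]
  have hrt0 : 0 < Real.sqrt n₀ := Real.sqrt_pos.mpr hn0
  have hrt2 : Real.sqrt n₀ ^ 2 = n₀ := Real.sq_sqrt hn0.le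
  have hkey2 : (s - a) ^ 2 = (2 * D * Real.sqrt a * Real.sqrt n₀) ^ 2 := by
    have hA : Real.sqrt a ^ 2 = a := Real.sq_sqrt ha0
    have e0 : (2 * D * Real.sqrt a * Real.sqrt n₀) ^ 2 = 4 * D ^ 2 * a * n₀ := by
      rw [mul_pow, mul_pow, hA, hrt2]; ring
    rw [e0]
    linear_combination hs2 - 2 * a * hn2
  have hkey : s - a = 2 * D * Real.sqrt a * Real.sqrt n₀ := by
    have h1 : 0 ≤ s - a := by linarith
    have h2 : 0 ≤ 2 * D * Real.sqrt a * Real.sqrt n₀ := by positivity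
    calc s - a = Real.sqrt ((s - a) ^ 2) := (Real.sqrt_sq h1).symm
    _ = Real.sqrt ((2 * D * Real.sqrt a * Real.sqrt n₀) ^ 2) := by rw [hkey2]
    _ = _ := Real.sqrt_sq h2
  have hmain : q - 2 * D * n₀ = 2 * σ * z * Real.sqrt n₀ := by
    apply mul_left_cancel₀ hD.ne'
    have e1 : D * (q - 2 * D * n₀) = b - (2 * D ^ 2 * n₀) := by rw [hb]; ring
    rw [e1, hn2]
    linear_combination hkey + 2 * D * Real.sqrt n₀ * hsa
  have heq : Real.sqrt n₀ * (q / (2 * n₀) - D) / σ = z := by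
    rw [div_eq_iff hσ.ne']
    have e2 : q / (2 * n₀) - D = (q - 2 * D * n₀) / (2 * n₀) := by
      field_simp
    rw [e2, hmain, ← hrt2]
    field_simp
    have e3 : Real.sqrt (Real.sqrt n₀ ^ 2) ^ 2 = Real.sqrt n₀ ^ 2 := by rw [Real.sqrt_sq hrt0.le]
    linear_combination z * e3
  refine ⟨hn0, heq, ?_⟩
  intro β hβ hcdf
  have : Real.sqrt n₀ / σ * (q / (2 * n₀) - D) = z := by
    rw [div_mul_eq_mul_div]; exact heq
  rw [this, hcdf]; ring

end
end
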